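/- arXiv:0912.5220 — 5 statements merged into one kernel-verified Lean document; each statement's English description precedes it below -/
import Mathlib

section
/- Suppose p is a-hyperbolic. Then the Gårding cone Γ_a is exactly the connected component of the open set {x ∈ ℝⁿ : p(x) ≠ 0} that contains the point a. -/
open MvPolynomial

/-- `lam : Fin m → ℝ` is a tuple of `a`-eigenvalues of `x` for the polynomial `p`:
`p(t·a + x) = p(a)·∏ₖ (t + lamₖ)` for all real `t`. -/
def IsEigen {n : ℕ} (m : ℕ) (p : MvPolynomial (Fin n) ℝ) (a x : Fin n → ℝ)
    (lam : Fin m → ℝ) : Prop :=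
  ∀ t : ℝ, eval (t • a + x) p = eval a p * ∏ k, (t + lam k)

/-- `p` is `a`-hyperbolic (of degree `m`): `p(a) > 0` and every `x` has `m` real
`a`-eigenvalues. -/
def IsHyperbolic {n : ℕ} (m : ℕ) (p : MvPolynomial (Fin n) ℝ) (a : Fin n → ℝ) : Prop :=
  0 < eval a p ∧ ∀ x : Fin n → ℝ, ∃ lam : Fin m → ℝ, IsEigen m p a x lam

/-- The open Gårding cone: the set of `x` all of whose `a`-eigenvalues are positive. -/
def GardingCone {n : ℕ} (m : ℕ) (p : MvPolynomial (Fin n) ℝ) (a : Fin n → ℝ) :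
    Set (Fin n → ℝ) :=
  {x | ∃ lam : Fin m → ℝ, IsEigen m p a x lam ∧ ∀ k, 0 < lam k}

-- The ordered (non-decreasing) arrangement `λ↑` of the `a`-eigenvalues of `x`
-- (defined via choice; for a hyperbolic `p` the monotone arrangement exists and is unique).
open scoped Classical in
noncomputable def ordEig {n : ℕ} (m : ℕ) (p : MvPolynomial (Fin n) ℝ) (a x : Fin n → ℝ) :
    Fin m → ℝ :=
  if h : ∃ lam : Fin m → ℝ, Monotone lam ∧ IsEigen m p a x lam then h.choose
  else fun _ => 0

/-- The directional derivative `p'_b(a) = (d/ds) p(a + s·b) |_{s=0}`. -/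
noncomputable def dirDeriv {n : ℕ} (p : MvPolynomial (Fin n) ℝ) (a b : Fin n → ℝ) : ℝ :=
  deriv (fun s : ℝ => eval (a + s • b) p) 0

section GardingAux

open Filter Topology Metric Set

variable {n m : ℕ} {p : MvPolynomial (Fin n) ℝ} {a : Fin n → ℝ}

lemma eval_smul_homog (hp : p.IsHomogeneous m) (c : ℝ) (x : Fin n → ℝ) :
    eval (c • x) p = c ^ m * eval x p := by
  rw [eval_eq', eval_eq', Finset.mul_sum]
  refine Finset.sum_congr rfl fun d hd => ?_
  have h2 : ∑ i, d i = m := by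
    have h1 : (Finsupp.weight (1 : Fin n → ℕ)) d = m := hp (mem_support_iff.mp hd)
    replace h1 : Finsupp.degree d = m := (DFunLike.congr_fun Finsupp.degree_eq_weight_one d).trans h1
    rw [← h1, Finsupp.degree_apply]
    exact (Finset.sum_subset (Finset.subset_univ _)
      (fun i _ hi => Finsupp.notMem_support_iff.mp hi)).symm
  simp only [Pi.smul_apply, smul_eq_mul, mul_pow, Finset.prod_mul_distrib,
    Finset.prod_pow_eq_pow_sum, h2]
  ring

/-- On the Gårding cone, `p(t a + x) > 0` for all `t ≥ 0`. -/
lemma pos_on_ray (hpa : 0 < eval a p) {x : Fin n → ℝ} (hx : x ∈ GardingCone m p a)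
    {t : ℝ} (ht : 0 ≤ t) : 0 < eval (t • a + x) p := by
  obtain ⟨lam, heig, hpos⟩ := hx
  rw [heig t]
  exact mul_pos hpa (Finset.prod_pos fun k _ => by linarith [hpos k])

/-- On the Gårding cone, `p(a + s x) > 0` for all `s ∈ [0,1]` (indeed all `s ≥ 0`). -/
lemma pos_on_seg (hp : p.IsHomogeneous m) (hpa : 0 < eval a p) {x : Fin n → ℝ}
    (hx : x ∈ GardingCone m p a) {s : ℝ} (hs : 0 ≤ s) : 0 < eval (a + s • x) p := by
  rcases eq_or_lt_of_le hs with h | h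
  · simpa [← h] using hpa
  · have key : a + s • x = s • (s⁻¹ • a + x) := by
      rw [smul_add, smul_smul, mul_inv_cancel₀ h.ne', one_smul]
    rw [key, eval_smul_homog hp]
    exact mul_pos (pow_pos h m) (pos_on_ray hpa hx (by positivity))

/-- Characterization of the Gårding cone by positivity on two compact parameter ranges. -/
lemma mem_garding_iff (hp : p.IsHomogeneous m) (hhyp : IsHyperbolic m p a)
    (x : Fin n → ℝ) :
    x ∈ GardingCone m p a ↔
      (∀ t ∈ Set.Icc (0:ℝ) 1, 0 < eval (t • a + x) p) ∧
      (∀ s ∈ Set.Icc (0:ℝ) 1, 0 < eval (a + s • x) p) := by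
  constructor
  · intro hx
    exact ⟨fun t ht => pos_on_ray hhyp.1 hx ht.1, fun s hs => pos_on_seg hp hhyp.1 hx hs.1⟩
  · rintro ⟨h1, h2⟩
    obtain ⟨lam, heig⟩ := hhyp.2 x
    refine ⟨lam, heig, fun k => ?_⟩
    by_contra hk
    push_neg at hk
    set t₀ : ℝ := -lam k with ht₀
    have ht₀0 : 0 ≤ t₀ := by linarith
    have hzero : eval (t₀ • a + x) p = 0 := by
      rw [heig t₀]
      have : t₀ + lam k = 0 := by simp [ht₀]
      rw [Finset.prod_eq_zero (Finset.mem_univ k) this, mul_zero]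
    rcases le_or_gt t₀ 1 with hle | hgt
    · exact absurd hzero (h1 t₀ ⟨ht₀0, hle⟩).ne'
    · have ht₀pos : 0 < t₀ := lt_trans one_pos hgt
      have key : a + t₀⁻¹ • x = t₀⁻¹ • (t₀ • a + x) := by
        rw [smul_add, smul_smul, inv_mul_cancel₀ ht₀pos.ne', one_smul]
      have : 0 < eval (a + t₀⁻¹ • x) p :=
        h2 t₀⁻¹ ⟨by positivity, by rw [inv_le_one_iff₀]; right; exact hgt.le⟩
      rw [key, eval_smul_homog hp, hzero, mul_zero] at this
      exact lt_irrefl 0 this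

lemma isOpen_garding (hp : p.IsHomogeneous m) (hhyp : IsHyperbolic m p a) :
    IsOpen (GardingCone m p a) := by
  have hset : GardingCone m p a =
      {x | ∀ t ∈ Set.Icc (0:ℝ) 1, 0 < eval (t • a + x) p} ∩
      {x | ∀ s ∈ Set.Icc (0:ℝ) 1, 0 < eval (a + s • x) p} := by
    ext x; simpa using mem_garding_iff hp hhyp x
  rw [hset]
  have hc1 : Continuous fun z : (Fin n → ℝ) × ℝ => eval (z.2 • a + z.1) p :=
    (MvPolynomial.continuous_eval p).comp ((continuous_snd.smul continuous_const).add
      continuous_fst)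
  have hc2 : Continuous fun z : (Fin n → ℝ) × ℝ => eval (a + z.2 • z.1) p :=
    (MvPolynomial.continuous_eval p).comp (continuous_const.add
      (continuous_snd.smul continuous_fst))
  apply IsOpen.inter
  · rw [isOpen_iff_mem_nhds]
    intro x hx
    have := isCompact_Icc.eventually_forall_of_forall_eventually
      (x₀ := x) (K := Set.Icc (0:ℝ) 1)
      (P := fun y t => 0 < eval (t • a + y) p) ?_
    · exact this
    · intro t ht
      exact (isOpen_lt continuous_const hc1).mem_nhds
        (by simpa using hx t ht)
  · rw [isOpen_iff_mem_nhds]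
    intro x hx
    have := isCompact_Icc.eventually_forall_of_forall_eventually
      (x₀ := x) (K := Set.Icc (0:ℝ) 1)
      (P := fun y s => 0 < eval (a + s • y) p) ?_
    · exact this
    · intro s hs
      exact (isOpen_lt continuous_const hc2).mem_nhds
        (by simpa using hx s hs)

/-- The Gårding cone is closed within `{p ≠ 0}`. -/
lemma mem_garding_of_closure (hhyp : IsHyperbolic m p a) {x : Fin n → ℝ}
    (hx : x ∈ closure (GardingCone m p a)) (hne : eval x p ≠ 0) :
    x ∈ GardingCone m p a := by
  obtain ⟨u, hu, hul⟩ := mem_closure_iff_seq_limit.mp hx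
  choose lam heig hpos using hu
  have hpa := hhyp.1
  -- boundedness of the eigenvalue tuples
  have hprod : ∀ i, ∏ k, (1 + lam i k) = eval (a + u i) p / eval a p := by
    intro i
    have := heig i 1
    rw [one_smul] at this
    rw [this]
    field_simp
  have htend : Tendsto (fun i => eval (a + u i) p / eval a p) atTop
      (𝓝 (eval (a + x) p / eval a p)) :=
    (((MvPolynomial.continuous_eval p).comp (continuous_const.add continuous_id)).continuousAt.tendsto.comp
      hul).div_const _
  obtain ⟨B, hB⟩ := htend.bddAbove_range
  have hone : ∀ i k, (1:ℝ) ≤ 1 + lam i k := fun i k => by linarith [hpos i k]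
  have hsingle : ∀ (i : ℕ) (k : Fin m), 1 + lam i k ≤ ∏ j, (1 + lam i j) := by
    intro i k
    rw [← Finset.mul_prod_erase _ _ (Finset.mem_univ k)]
    have h1 : (1:ℝ) ≤ ∏ j ∈ Finset.univ.erase k, (1 + lam i j) := by
      calc (1:ℝ) = ∏ _j ∈ Finset.univ.erase k, (1:ℝ) := by simp
      _ ≤ _ := Finset.prod_le_prod (by simp) fun j _ => hone i j
    exact le_mul_of_one_le_right (by linarith [hone i k]) h1
  have hbound : ∀ (i : ℕ) (k : Fin m), lam i k ≤ B - 1 := by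
    intro i k
    have h2 : eval (a + u i) p / eval a p ≤ B := hB ⟨i, rfl⟩
    have h3 := hsingle i k
    rw [hprod i] at h3
    linarith
  set R : ℝ := |B| + 1 with hR
  have hmem : ∀ i, lam i ∈ Metric.closedBall (0 : Fin m → ℝ) R := by
    intro i
    rw [mem_closedBall, dist_pi_le_iff (by positivity)]
    intro k
    rw [Real.dist_eq, Pi.zero_apply, sub_zero, abs_of_pos (hpos i k)]
    have := hbound i k
    have := le_abs_self B
    linarith
  obtain ⟨μ, -, φ, hφ, hμ⟩ :=
    tendsto_subseq_of_bounded (Metric.isBounded_closedBall (x := (0 : Fin m → ℝ)) (r := R)) hmem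
  have hco : ∀ k, Tendsto (fun i => lam (φ i) k) atTop (𝓝 (μ k)) := fun k =>
    ((continuous_apply k).continuousAt.tendsto).comp hμ
  have hnonneg : ∀ k, 0 ≤ μ k := fun k =>
    ge_of_tendsto' (hco k) fun i => (hpos _ k).le
  have heigμ : IsEigen m p a x μ := by
    intro t
    have h1 : Tendsto (fun i => eval (t • a + u (φ i)) p) atTop (𝓝 (eval (t • a + x) p)) :=
      (((MvPolynomial.continuous_eval p).comp
        (continuous_const.add continuous_id)).continuousAt.tendsto).comp
        (hul.comp hφ.tendsto_atTop)
    have h2 : Tendsto (fun i => eval a p * ∏ k, (t + lam (φ i) k)) atTop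
        (𝓝 (eval a p * ∏ k, (t + μ k))) :=
      tendsto_const_nhds.mul
        (tendsto_finset_prod _ fun k _ => tendsto_const_nhds.add (hco k))
    have heq : (fun i => eval (t • a + u (φ i)) p)
        = fun i => eval a p * ∏ k, (t + lam (φ i) k) := funext fun i => by have := heig (φ i) t; exact this
    rw [heq] at h1
    exact tendsto_nhds_unique h1 h2
  refine ⟨μ, heigμ, fun k => ?_⟩
  rcases (hnonneg k).eq_or_lt with h0 | h0
  · exfalso
    apply hne
    have := heigμ 0
    rw [zero_smul, zero_add] at this
    rw [this, Finset.prod_eq_zero (Finset.mem_univ k) (by simp [← h0]), mul_zero]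
  · exact h0

end GardingAux

/-- the Gårding cone `Γ_a` is exactly the connected component of
`{x : p(x) ≠ 0}` containing `a`. -/
theorem garding_cone_eq_connectedComponentIn
    {n m : ℕ} (hm : 1 ≤ m) (p : MvPolynomial (Fin n) ℝ) (hp : p.IsHomogeneous m)
    (a : Fin n → ℝ) (hhyp : IsHyperbolic m p a) :
    GardingCone m p a = connectedComponentIn {x : Fin n → ℝ | eval x p ≠ 0} a := by
  have hpa := hhyp.1
  set U : Set (Fin n → ℝ) := {x | eval x p ≠ 0} with hU
  have haU : a ∈ U := hpa.ne'
  have hUopen : IsOpen U := isOpen_ne_fun (MvPolynomial.continuous_eval p) continuous_const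
  have hΓsubU : GardingCone m p a ⊆ U := by
    intro x hx
    obtain ⟨lam, heig, hpos⟩ := hx
    have h0 := heig 0
    rw [zero_smul, zero_add] at h0
    have : 0 < eval x p := by
      rw [h0]
      exact mul_pos hpa (Finset.prod_pos fun k _ => by simpa using hpos k)
    exact this.ne'
  have haΓ : a ∈ GardingCone m p a := by
    refine ⟨fun _ => 1, fun t => ?_, fun _ => one_pos⟩
    rw [show t • a + a = (t + 1) • a by rw [add_smul, one_smul], eval_smul_homog hp]
    rw [Finset.prod_const, Finset.card_univ, Fintype.card_fin]
    ring
  apply Set.Subset.antisymm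
  · intro x hx
    have hseg : segment ℝ a x ⊆ U := by
      intro y hy
      rw [segment_eq_image ℝ a x] at hy
      obtain ⟨s, hs, rfl⟩ := hy
      rcases hs.1.eq_or_lt with h0 | h0
      · simp only [← h0, sub_zero, one_smul, zero_smul, add_zero]
        exact haU
      · have key : (1 - s) • a + s • x = s • (((1 - s) / s) • a + x) := by
          rw [smul_add, smul_smul, mul_div_cancel₀ _ h0.ne']
        have hpos : 0 < eval (((1 - s) / s) • a + x) p :=
          pos_on_ray hpa hx (div_nonneg (by linarith [hs.2]) h0.le)
        show eval ((1 - s) • a + s • x) p ≠ 0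
        rw [key, eval_smul_homog hp]
        exact (mul_pos (pow_pos h0 m) hpos).ne'
    exact ((convex_segment a x).isPreconnected.subset_connectedComponentIn
      (left_mem_segment ℝ a x) hseg) (right_mem_segment ℝ a x)
  · intro x hx
    set V : Set (Fin n → ℝ) := U ∩ (closure (GardingCone m p a))ᶜ with hV
    have hVopen : IsOpen V := hUopen.inter isClosed_closure.isOpen_compl
    have hdisj : Disjoint (GardingCone m p a) V := by
      rw [Set.disjoint_left]
      intro y hy hyV
      exact hyV.2 (subset_closure hy)
    have hcover : connectedComponentIn U a ⊆ GardingCone m p a ∪ V := by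
      intro y hy
      have hyU : y ∈ U := connectedComponentIn_subset U a hy
      by_cases hc : y ∈ closure (GardingCone m p a)
      · exact Or.inl (mem_garding_of_closure hhyp hc hyU)
      · exact Or.inr ⟨hyU, hc⟩
    exact (isPreconnected_connectedComponentIn).subset_left_of_subset_union
      (isOpen_garding hp hhyp) hVopen hdisj hcover
      ⟨a, mem_connectedComponentIn haU, haΓ⟩ hx
end

section
/- Suppose p is a-hyperbolic with Gårding cone Γ. Then: (a) Γ is a convex subset of ℝⁿ; (b) the smallest ordered eigenvalue function x ↦ λ↑₁(x) = λ_min(x) is concave on ℝⁿ; and (c) the largest ordered eigenvalue function x ↦ λ↑ₘ(x) = λ_max(x) is convex on ℝⁿ. -/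
open MvPolynomial

section GardingAux

namespace GA
variable {n m : ℕ}

noncomputable def pC (p : MvPolynomial (Fin n) ℝ) : MvPolynomial (Fin n) ℂ :=
  MvPolynomial.map (algebraMap ℝ ℂ) p

def cv (x : Fin n → ℝ) : Fin n → ℂ := fun i => (x i : ℂ)

noncomputable def cL (p : MvPolynomial (Fin n) ℝ) (u v : Fin n → ℂ) : Polynomial ℂ :=
  MvPolynomial.eval₂ ((Polynomial.C : ℂ →+* Polynomial ℂ).comp (algebraMap ℝ ℂ))
    (fun i => Polynomial.C (u i) + Polynomial.C (v i) * Polynomial.X) p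

theorem eval_smul_hom {S : Type*} [CommRing S] (q : MvPolynomial (Fin n) S)
    (h : q.IsHomogeneous m) (c : S) (v : Fin n → S) :
    MvPolynomial.eval (c • v) q = c ^ m * MvPolynomial.eval v q := by
  rw [MvPolynomial.eval_eq', MvPolynomial.eval_eq', Finset.mul_sum]
  apply Finset.sum_congr rfl
  intro d hd
  have hdeg : (∑ i, d i) = m := by
    have h1 : d.degree = m := by
      rw [Finsupp.degree_eq_weight_one]
      exact h (MvPolynomial.mem_support_iff.mp hd)
    rw [← h1, Finsupp.degree]
    exact (Finset.sum_subset (Finset.subset_univ _) (by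
      intro i _ hi; exact Finsupp.notMem_support_iff.mp hi)).symm
  have : ∏ i, (c • v) i ^ d i = c ^ m * ∏ i, v i ^ d i := by
    simp only [Pi.smul_apply, smul_eq_mul, mul_pow]
    rw [Finset.prod_mul_distrib, Finset.prod_pow_eq_pow_sum, hdeg]
  rw [this]; ring

theorem pC_homog {p : MvPolynomial (Fin n) ℝ} (hp : p.IsHomogeneous m) :
    (pC p).IsHomogeneous m := hp.map _

theorem eval_pC_real (p : MvPolynomial (Fin n) ℝ) (x : Fin n → ℝ) :
    MvPolynomial.eval (cv x) (pC p) = ((MvPolynomial.eval x p : ℝ) : ℂ) := by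
  rw [pC, MvPolynomial.eval_map]
  have h := MvPolynomial.eval₂_comp_left (algebraMap ℝ ℂ) (RingHom.id ℝ) x p
  rw [MvPolynomial.eval₂_id] at h
  have hf : (algebraMap ℝ ℂ).comp (RingHom.id ℝ) = algebraMap ℝ ℂ := by ext r; simp
  have hg : (⇑(algebraMap ℝ ℂ) ∘ x) = cv x := by funext i; simp [cv]
  rw [hf, hg] at h
  exact h.symm

theorem eval_cL (p : MvPolynomial (Fin n) ℝ) (u v : Fin n → ℂ) (s : ℂ) :
    (cL p u v).eval s = MvPolynomial.eval (u + s • v) (pC p) := by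
  have h := MvPolynomial.eval₂_comp_left (Polynomial.evalRingHom s)
    ((Polynomial.C : ℂ →+* Polynomial ℂ).comp (algebraMap ℝ ℂ))
    (fun i => Polynomial.C (u i) + Polynomial.C (v i) * Polynomial.X) p
  have hf : (Polynomial.evalRingHom s).comp ((Polynomial.C : ℂ →+* Polynomial ℂ).comp
      (algebraMap ℝ ℂ)) = algebraMap ℝ ℂ := by ext r; simp
  have hg : (⇑(Polynomial.evalRingHom s) ∘ fun i =>
      Polynomial.C (u i) + Polynomial.C (v i) * Polynomial.X) = (u + s • v) := by
    funext i
    show Polynomial.eval s (Polynomial.C (u i) + Polynomial.C (v i) * Polynomial.X) = _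
    simp only [Polynomial.eval_add, Polynomial.eval_mul, Polynomial.eval_C,
      Polynomial.eval_X, Pi.add_apply, Pi.smul_apply, smul_eq_mul]
    ring
  rw [hf, hg] at h
  rw [pC, MvPolynomial.eval_map]
  exact h

end GA

namespace GA2
open GA
variable {n m : ℕ}

theorem natDegree_cL_le {p : MvPolynomial (Fin n) ℝ} (hp : p.IsHomogeneous m)
    (u v : Fin n → ℂ) : (cL p u v).natDegree ≤ m := by
  rw [cL, MvPolynomial.eval₂_eq]
  apply Polynomial.natDegree_sum_le_of_forall_le
  intro d hd
  have hdeg : d.degree = m := by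
    rw [Finsupp.degree_eq_weight_one]; exact hp (MvPolynomial.mem_support_iff.mp hd)
  refine (Polynomial.natDegree_mul_le).trans ?_
  have h1 : (∏ i ∈ d.support, (Polynomial.C (u i) + Polynomial.C (v i) * Polynomial.X) ^ d i).natDegree ≤ m := by
    refine (Polynomial.natDegree_prod_le _ _).trans ?_
    rw [← hdeg, Finsupp.degree]
    apply Finset.sum_le_sum
    intro i _
    refine (Polynomial.natDegree_pow_le).trans ?_
    have : (Polynomial.C (u i) + Polynomial.C (v i) * Polynomial.X).natDegree ≤ 1 := by
      rw [add_comm]; exact Polynomial.natDegree_linear_le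
    calc d i * (Polynomial.C (u i) + Polynomial.C (v i) * Polynomial.X).natDegree
        ≤ d i * 1 := Nat.mul_le_mul_left _ this
      _ = d i := Nat.mul_one _
  simpa using h1

theorem cL_eq_rev {p : MvPolynomial (Fin n) ℝ} (hp : p.IsHomogeneous m)
    (u v : Fin n → ℂ) :
    cL p u v = ∑ k ∈ Finset.range (m + 1),
      Polynomial.C ((cL p v u).coeff k) * Polynomial.X ^ (m - k) := by
  apply Polynomial.eq_of_infinite_eval_eq
  apply Set.Infinite.mono (s := Set.range (fun (r : ℕ) => ((r + 1 : ℕ) : ℂ)))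
  · rintro - ⟨r, rfl⟩
    have hs : ((r + 1 : ℕ) : ℂ) ≠ 0 := by
      exact_mod_cast Nat.succ_ne_zero r
    set s : ℂ := ((r + 1 : ℕ) : ℂ)
    simp only [Set.mem_setOf_eq]
    have h1 : (cL p u v).eval s = s ^ m * (cL p v u).eval s⁻¹ := by
      rw [eval_cL, eval_cL]
      have : u + s • v = s • (s⁻¹ • u + v) := by
        rw [smul_add, ← mul_smul, mul_inv_cancel₀ hs, one_smul, add_comm]
      rw [this, eval_smul_hom _ (pC_homog hp)]
      congr 1
      congr 1
      rw [add_comm]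
    rw [h1, Polynomial.eval_eq_sum_range' (Nat.lt_succ_of_le (natDegree_cL_le hp v u)),
      Polynomial.eval_finset_sum, Finset.mul_sum]
    apply Finset.sum_congr rfl
    intro k hk
    rw [Finset.mem_range, Nat.lt_succ_iff] at hk
    simp only [Polynomial.eval_mul, Polynomial.eval_pow, Polynomial.eval_C, Polynomial.eval_X,
      inv_pow]
    have hss : (s : ℂ) ^ k * (s ^ k)⁻¹ = 1 := mul_inv_cancel₀ (pow_ne_zero _ hs)
    calc s ^ m * ((cL p v u).coeff k * (s ^ k)⁻¹)
        = (cL p v u).coeff k * (s ^ (m - k) * (s ^ k * (s ^ k)⁻¹)) := by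
          rw [show s ^ m = s ^ (m - k) * s ^ k from by rw [← pow_add]; congr 1; omega]; ring
      _ = (cL p v u).coeff k * s ^ (m - k) := by rw [hss, mul_one]
  · apply Set.infinite_range_of_injective
    intro i j hij
    have hij2 : ((i + 1 : ℕ) : ℂ) = ((j + 1 : ℕ) : ℂ) := hij
    have h2 : (i + 1 : ℕ) = (j + 1 : ℕ) := by exact_mod_cast hij2
    omega

theorem coeff_cL_m {p : MvPolynomial (Fin n) ℝ} (hp : p.IsHomogeneous m)
    (u v : Fin n → ℂ) : (cL p u v).coeff m = MvPolynomial.eval v (pC p) := by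
  rw [cL_eq_rev hp, Polynomial.finset_sum_coeff]
  rw [Finset.sum_eq_single 0]
  · simp only [Polynomial.coeff_C_mul, Nat.sub_zero, Polynomial.coeff_X_pow, if_pos rfl, mul_one]
    rw [Polynomial.coeff_zero_eq_eval_zero, eval_cL]
    simp
  · intro k hk hk0
    rw [Finset.mem_range, Nat.lt_succ_iff] at hk
    simp only [Polynomial.coeff_C_mul, Polynomial.coeff_X_pow]
    rw [if_neg (by omega), mul_zero]
  · intro h
    exact absurd (Finset.mem_range.mpr (Nat.succ_pos m)) h

noncomputable def cM (p : MvPolynomial (Fin n) ℝ) (v : Fin n → ℂ) :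
    Polynomial (MvPolynomial (Fin n) ℂ) :=
  MvPolynomial.eval₂
    ((Polynomial.C : MvPolynomial (Fin n) ℂ →+* Polynomial (MvPolynomial (Fin n) ℂ)).comp
      ((MvPolynomial.C : ℂ →+* MvPolynomial (Fin n) ℂ).comp (algebraMap ℝ ℂ)))
    (fun i => Polynomial.C (MvPolynomial.X i) +
      Polynomial.C (MvPolynomial.C (v i)) * Polynomial.X) p

theorem cL_eq_cM (p : MvPolynomial (Fin n) ℝ) (u v : Fin n → ℂ) :
    cL p u v = (cM p v).map (MvPolynomial.eval u) := by
  have h := MvPolynomial.eval₂_comp_left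
    (Polynomial.mapRingHom (MvPolynomial.eval u : MvPolynomial (Fin n) ℂ →+* ℂ))
    ((Polynomial.C : MvPolynomial (Fin n) ℂ →+* Polynomial (MvPolynomial (Fin n) ℂ)).comp
      ((MvPolynomial.C : ℂ →+* MvPolynomial (Fin n) ℂ).comp (algebraMap ℝ ℂ)))
    (fun i => Polynomial.C (MvPolynomial.X i) +
      Polynomial.C (MvPolynomial.C (v i)) * Polynomial.X) p
  rw [← Polynomial.coe_mapRingHom, cM, cL, h]
  have hf : ((Polynomial.mapRingHom (MvPolynomial.eval u : MvPolynomial (Fin n) ℂ →+* ℂ)).comp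
      ((Polynomial.C : MvPolynomial (Fin n) ℂ →+* Polynomial (MvPolynomial (Fin n) ℂ)).comp
        ((MvPolynomial.C : ℂ →+* MvPolynomial (Fin n) ℂ).comp (algebraMap ℝ ℂ)))) =
      (Polynomial.C : ℂ →+* Polynomial ℂ).comp (algebraMap ℝ ℂ) := by
    ext r; simp
  have hg : (⇑(Polynomial.mapRingHom (MvPolynomial.eval u : MvPolynomial (Fin n) ℂ →+* ℂ)) ∘
      fun i => Polynomial.C (MvPolynomial.X i) +
        Polynomial.C (MvPolynomial.C (v i)) * Polynomial.X) =
      fun i => Polynomial.C (u i) + Polynomial.C (v i) * Polynomial.X := by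
    funext i; simp
  rw [hf, hg]

theorem coeff_cL_cont (p : MvPolynomial (Fin n) ℝ) (v : Fin n → ℂ) (k : ℕ) :
    Continuous fun u : Fin n → ℂ => (cL p u v).coeff k := by
  have h : ∀ u : Fin n → ℂ, (cL p u v).coeff k =
      MvPolynomial.eval u ((cM p v).coeff k) := by
    intro u
    rw [cL_eq_cM, Polynomial.coeff_map]
  simp only [h]
  exact MvPolynomial.continuous_eval (p := (cM p v).coeff k)

end GA2

namespace GA3
open GA GA2
variable {n m : ℕ}

noncomputable def rL (p : MvPolynomial (Fin n) ℝ) (u v : Fin n → ℝ) : Polynomial ℝ :=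
  MvPolynomial.eval₂ (Polynomial.C : ℝ →+* Polynomial ℝ)
    (fun i => Polynomial.C (u i) + Polynomial.C (v i) * Polynomial.X) p

theorem cL_real (p : MvPolynomial (Fin n) ℝ) (u v : Fin n → ℝ) :
    cL p (cv u) (cv v) = (rL p u v).map (algebraMap ℝ ℂ) := by
  have h := MvPolynomial.eval₂_comp_left (Polynomial.mapRingHom (algebraMap ℝ ℂ))
    (Polynomial.C : ℝ →+* Polynomial ℝ)
    (fun i => Polynomial.C (u i) + Polynomial.C (v i) * Polynomial.X) p
  rw [← Polynomial.coe_mapRingHom, rL, cL, h]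
  have hf : (Polynomial.mapRingHom (algebraMap ℝ ℂ)).comp (Polynomial.C : ℝ →+* Polynomial ℝ)
      = (Polynomial.C : ℂ →+* Polynomial ℂ).comp (algebraMap ℝ ℂ) := by ext r; simp
  have hg : (⇑(Polynomial.mapRingHom (algebraMap ℝ ℂ)) ∘
      fun i => Polynomial.C (u i) + Polynomial.C (v i) * Polynomial.X) =
      fun i => Polynomial.C (cv u i) + Polynomial.C (cv v i) * Polynomial.X := by
    funext i; simp [cv]
  rw [hf, hg]

theorem conj_root (p : MvPolynomial (Fin n) ℝ) (u v : Fin n → ℝ) {z : ℂ}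
    (hz : Polynomial.eval z (cL p (cv u) (cv v)) = 0) :
    Polynomial.eval ((starRingEnd ℂ) z) (cL p (cv u) (cv v)) = 0 := by
  rw [cL_real] at hz ⊢
  have h2 : Polynomial.eval ((starRingEnd ℂ) z) ((rL p u v).map (algebraMap ℝ ℂ)) =
      (starRingEnd ℂ) (Polynomial.eval z ((rL p u v).map (algebraMap ℝ ℂ))) := by
    rw [Polynomial.eval_map, Polynomial.eval_map, Polynomial.hom_eval₂]
    have hf : (starRingEnd ℂ).comp (algebraMap ℝ ℂ) = algebraMap ℝ ℂ := by
      ext r; simp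
    rw [hf]
  rw [h2, hz, map_zero]

theorem cv_add_smul (x c : Fin n → ℝ) (t : ℝ) :
    cv x + (t : ℂ) • cv c = cv (t • c + x) := by
  funext i; simp [cv]; push_cast; ring

theorem eval_cL_real (p : MvPolynomial (Fin n) ℝ) (x c : Fin n → ℝ) (t : ℝ) :
    Polynomial.eval (t : ℂ) (cL p (cv x) (cv c)) = ((MvPolynomial.eval (t • c + x) p : ℝ) : ℂ) := by
  rw [eval_cL, cv_add_smul, eval_pC_real]

theorem cL_factor {p : MvPolynomial (Fin n) ℝ} {c x : Fin n → ℝ} {lam : Fin m → ℝ}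
    (hl : IsEigen m p c x lam) :
    cL p (cv x) (cv c) = Polynomial.C ((MvPolynomial.eval c p : ℝ) : ℂ) *
      ∏ k : Fin m, (Polynomial.X - Polynomial.C ((-lam k : ℝ) : ℂ)) := by
  apply Polynomial.eq_of_infinite_eval_eq
  apply Set.Infinite.mono (s := Set.range (fun (t : ℝ) => (t : ℂ)))
  · rintro - ⟨t, rfl⟩
    simp only [Set.mem_setOf_eq]
    rw [eval_cL_real, hl t]
    simp only [Polynomial.eval_mul, Polynomial.eval_C, Polynomial.eval_prod,
      Polynomial.eval_sub, Polynomial.eval_X]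
    simp [sub_neg_eq_add]
  · exact Set.infinite_range_of_injective Complex.ofReal_injective

theorem roots_factor (c' : ℂ) (hc : c' ≠ 0) (r : Fin m → ℂ) :
    (Polynomial.C c' * ∏ k, (Polynomial.X - Polynomial.C (r k))).roots
      = Multiset.map r Finset.univ.val := by
  rw [Polynomial.roots_C_mul _ hc, Finset.prod_eq_multiset_prod]
  have h2 : (Multiset.map (fun k => Polynomial.X - Polynomial.C (r k)) Finset.univ.val)
      = Multiset.map (fun a => Polynomial.X - Polynomial.C a)
          (Multiset.map r Finset.univ.val) := by
    rw [Multiset.map_map]; rfl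
  rw [h2, Polynomial.roots_multiset_prod_X_sub_C]

theorem multiset_to_tuple {s : Multiset ℂ} (h : Multiset.card s = m) :
    ∃ f : Fin m → ℂ, s = Multiset.map f Finset.univ.val := by
  have hl : s.toList.length = m := by rw [Multiset.length_toList, h]
  refine ⟨fun k => s.toList.get (Fin.cast hl.symm k), ?_⟩
  have huniv : (Finset.univ : Finset (Fin m)).val = ↑(List.finRange m) := rfl
  have hofn : List.ofFn (fun k => s.toList.get (Fin.cast hl.symm k)) = s.toList := by
    apply List.ext_get
    · simp [hl]
    · intro i h1 h2
      simp [List.get_ofFn]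
  rw [huniv, Multiset.map_coe, ← List.ofFn_eq_map, hofn, Multiset.coe_toList]

end GA3

namespace GB
open GA GA2 GA3 Filter
variable {n m : ℕ}

theorem ms_prod_le {ε : ℝ} (hε : 0 ≤ ε) :
    ∀ (s : Multiset ℝ), (∀ a ∈ s, ε ≤ a) → ε ^ Multiset.card s ≤ s.prod := by
  intro s
  induction s using Multiset.induction with
  | empty => simp
  | cons a s ih =>
    intro h
    rw [Multiset.card_cons, Multiset.prod_cons, pow_succ, mul_comm (ε ^ Multiset.card s) ε]
    have ha : ε ≤ a := h a (Multiset.mem_cons_self a s)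
    have hs : ε ^ Multiset.card s ≤ s.prod := ih (fun b hb => h b (Multiset.mem_cons_of_mem hb))
    exact mul_le_mul ha hs (pow_nonneg hε _) (le_trans hε ha)

theorem natDegree_eq {q : Polynomial ℂ} {c : ℂ} (hc : c ≠ 0)
    (hdeg : q.natDegree ≤ m) (hcm : q.coeff m = c) : q.natDegree = m :=
  le_antisymm hdeg (Polynomial.le_natDegree_of_ne_zero (by rw [hcm]; exact hc))

theorem card_roots_eq {q : Polynomial ℂ} {c : ℂ} (hc : c ≠ 0)
    (hdeg : q.natDegree ≤ m) (hcm : q.coeff m = c) : Multiset.card q.roots = m := by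
  have h1 := (IsAlgClosed.splits q).natDegree_eq_card_roots
  rw [← h1, natDegree_eq hc hdeg hcm]

theorem rep_roots {q : Polynomial ℂ} {c : ℂ} (hc : c ≠ 0)
    (hdeg : q.natDegree ≤ m) (hcm : q.coeff m = c) :
    Polynomial.C c * (q.roots.map fun a => Polynomial.X - Polynomial.C a).prod = q := by
  have h2 := Polynomial.C_leadingCoeff_mul_prod_multiset_X_sub_C (p := q)
    (by rw [card_roots_eq hc hdeg hcm, natDegree_eq hc hdeg hcm])
  have hlc : q.leadingCoeff = c := by
    rw [Polynomial.leadingCoeff, natDegree_eq hc hdeg hcm, hcm]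
  rw [← hlc]
  exact h2

theorem root_bound {q : Polynomial ℂ} {c : ℂ}
    (hdeg : q.natDegree ≤ m) (hcm : q.coeff m = c) (hc : c ≠ 0) {z : ℂ}
    (hz : q.eval z = 0) :
    ‖z‖ ≤ 1 + (∑ k ∈ Finset.range m, ‖q.coeff k‖) / ‖c‖ := by
  have hS : (0:ℝ) ≤ (∑ k ∈ Finset.range m, ‖q.coeff k‖) := by positivity
  have hcabs : (0:ℝ) < ‖c‖ := by simpa using hc
  by_cases h1 : ‖z‖ ≤ 1
  · have : (0:ℝ) ≤ (∑ k ∈ Finset.range m, ‖q.coeff k‖) / ‖c‖ :=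
      div_nonneg hS hcabs.le
    linarith
  push_neg at h1
  have he : (0:ℂ) = ∑ k ∈ Finset.range (m+1), q.coeff k * z ^ k := by
    rw [← hz]; exact Polynomial.eval_eq_sum_range' (Nat.lt_succ_of_le hdeg) z
  rw [Finset.sum_range_succ, hcm] at he
  have h2 : c * z ^ m = -∑ k ∈ Finset.range m, q.coeff k * z ^ k := by
    rw [eq_neg_iff_add_eq_zero, add_comm, ← he]
  have hm1 : 1 ≤ m := by
    by_contra hm0
    push_neg at hm0
    interval_cases m
    · simp at h2
      exact hc h2
  have h3 : ‖c‖ * ‖z‖ ^ m ≤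
      (∑ k ∈ Finset.range m, ‖q.coeff k‖) * ‖z‖ ^ (m - 1) := by
    rw [← norm_pow, ← norm_mul, h2, norm_neg]
    refine (norm_sum_le _ _).trans ?_
    rw [Finset.sum_mul]
    apply Finset.sum_le_sum
    intro k hk
    rw [Finset.mem_range] at hk
    rw [norm_mul, norm_pow]
    apply mul_le_mul_of_nonneg_left _ (norm_nonneg _)
    exact pow_le_pow_right₀ h1.le (by omega)
  have hzpos : (0:ℝ) < ‖z‖ ^ (m-1) := pow_pos (lt_trans one_pos h1) _
  have h4 : ‖z‖ ^ m = ‖z‖ ^ (m-1) * ‖z‖ := by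
    rw [← pow_succ]
    congr 1
    omega
  have h6 : (‖c‖ * ‖z‖) * ‖z‖ ^ (m-1) ≤
      (∑ k ∈ Finset.range m, ‖q.coeff k‖) * ‖z‖ ^ (m-1) := by
    calc (‖c‖ * ‖z‖) * ‖z‖ ^ (m-1)
        = ‖c‖ * ‖z‖ ^ m := by rw [h4]; ring
      _ ≤ _ := h3
  have h7 := le_of_mul_le_mul_right h6 hzpos
  have h8 : ‖z‖ ≤ (∑ k ∈ Finset.range m, ‖q.coeff k‖) / ‖c‖ := by
    rw [le_div_iff₀ hcabs]
    linarith [h7]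
  linarith

theorem eval_tendsto {F : ℕ → Polynomial ℂ} {q : Polynomial ℂ}
    (hdeg : ∀ j, (F j).natDegree ≤ m) (hqdeg : q.natDegree ≤ m)
    (hcoef : ∀ k, Tendsto (fun j => (F j).coeff k) atTop (nhds (q.coeff k))) (w : ℂ) :
    Tendsto (fun j => (F j).eval w) atTop (nhds (q.eval w)) := by
  have hev : ∀ j, (F j).eval w = ∑ k ∈ Finset.range (m + 1), (F j).coeff k * w ^ k :=
    fun j => Polynomial.eval_eq_sum_range' (Nat.lt_succ_of_le (hdeg j)) w
  have hqev : q.eval w = ∑ k ∈ Finset.range (m + 1), q.coeff k * w ^ k :=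
    Polynomial.eval_eq_sum_range' (Nat.lt_succ_of_le hqdeg) w
  simp only [hev, hqev]
  exact tendsto_finset_sum _ (fun k _ => (hcoef k).mul tendsto_const_nhds)

theorem limroot {F : ℕ → Polynomial ℂ} {q : Polynomial ℂ} {c : ℂ} (hc : c ≠ 0)
    (hdeg : ∀ j, (F j).natDegree ≤ m) (hcm : ∀ j, (F j).coeff m = c)
    (hqdeg : q.natDegree ≤ m)
    (hcoef : ∀ k, Tendsto (fun j => (F j).coeff k) atTop (nhds (q.coeff k)))
    {z : ℕ → ℂ} (hz : ∀ j, (F j).eval (z j) = 0)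
    {C : Set ℂ} (hC : IsClosed C) (hzC : ∀ j, z j ∈ C) :
    ∃ z₀ ∈ C, q.eval z₀ = 0 := by
  -- uniform bound on the roots
  have hB : Tendsto (fun j => ∑ k ∈ Finset.range m, ‖(F j).coeff k‖) atTop
      (nhds (∑ k ∈ Finset.range m, ‖q.coeff k‖)) :=
    tendsto_finset_sum _ (fun k _ => (continuous_norm.tendsto _).comp (hcoef k))
  obtain ⟨M, hM⟩ := hB.bddAbove_range
  have hRb : ∀ j, ‖z j‖ ≤ 1 + M / ‖c‖ := by
    intro j
    refine (root_bound (hdeg j) (hcm j) hc (hz j)).trans ?_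
    have h1 : (∑ k ∈ Finset.range m, ‖(F j).coeff k‖) ≤ M :=
      hM (Set.mem_range_self j)
    have h2 : (0:ℝ) < ‖c‖ := by
      simpa using hc
    gcongr
  set R := 1 + M / ‖c‖
  have hmem : ∀ j, z j ∈ Metric.closedBall (0 : ℂ) R := by
    intro j
    simpa [Metric.mem_closedBall, Complex.dist_eq] using hRb j
  obtain ⟨z₀, hz₀R, φ, hφ, hlim⟩ :=
    (isCompact_closedBall (0:ℂ) R).tendsto_subseq hmem
  refine ⟨z₀, hC.mem_of_tendsto hlim (Eventually.of_forall fun j => hzC (φ j)), ?_⟩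
  have h1 : Tendsto (fun j => (F (φ j)).eval (z (φ j))) atTop (nhds (q.eval z₀)) := by
    have hev : ∀ j, (F j).eval (z j) = ∑ k ∈ Finset.range (m + 1), (F j).coeff k * (z j) ^ k :=
      fun j => Polynomial.eval_eq_sum_range' (Nat.lt_succ_of_le (hdeg j)) _
    have hqev : q.eval z₀ = ∑ k ∈ Finset.range (m + 1), q.coeff k * z₀ ^ k :=
      Polynomial.eval_eq_sum_range' (Nat.lt_succ_of_le hqdeg) _
    simp only [hev, hqev]
    apply tendsto_finset_sum
    intro k _
    exact ((hcoef k).comp (hφ.tendsto_atTop)).mul (hlim.pow k)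
  have h2 : Tendsto (fun j => (F (φ j)).eval (z (φ j))) atTop (nhds 0) := by
    simp only [hz]
    exact tendsto_const_nhds
  exact (tendsto_nhds_unique h2 h1).symm

theorem nearroot {F : ℕ → Polynomial ℂ} {q : Polynomial ℂ} {c : ℂ} (hc : c ≠ 0)
    (hdeg : ∀ j, (F j).natDegree ≤ m) (hcm : ∀ j, (F j).coeff m = c)
    (hqdeg : q.natDegree ≤ m)
    (hcoef : ∀ k, Tendsto (fun j => (F j).coeff k) atTop (nhds (q.coeff k)))
    {z₀ : ℂ} (hz₀ : q.eval z₀ = 0) {ε : ℝ} (hε : 0 < ε) :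
    ∀ᶠ j in atTop, ∃ z, (F j).eval z = 0 ∧ ‖z - z₀‖ < ε := by
  have hcabs : (0:ℝ) < ‖c‖ := by simpa using hc
  have h1 : Tendsto (fun j => (F j).eval z₀) atTop (nhds 0) := by
    rw [← hz₀]
    exact eval_tendsto hdeg hqdeg hcoef z₀
  have h2 : ∀ᶠ j in atTop, ‖(F j).eval z₀‖ < ‖c‖ * ε ^ m := by
    have hpos : (0:ℝ) < ‖c‖ * ε ^ m := by positivity
    have := h1.eventually (Metric.ball_mem_nhds (0:ℂ) hpos)
    filter_upwards [this] with j hj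
    simpa [Complex.dist_eq] using hj
  filter_upwards [h2] with j hj
  by_contra hcon
  push_neg at hcon
  have hrep := rep_roots hc (hdeg j) (hcm j)
  have hcard := card_roots_eq hc (hdeg j) (hcm j)
  have habs : ‖(F j).eval z₀‖ =
      ‖c‖ * ((F j).roots.map fun r => ‖z₀ - r‖).prod := by
    conv_lhs => rw [← hrep]
    rw [Polynomial.eval_mul, Polynomial.eval_C, Polynomial.eval_multiset_prod, norm_mul]
    congr 1
    rw [show ∀ s : Multiset ℂ, ‖s.prod‖ = (s.map fun x => ‖x‖).prod from
      fun s => map_multiset_prod (normHom (α := ℂ)) s, Multiset.map_map, Multiset.map_map]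
    congr 1
    apply Multiset.map_congr rfl
    intro r _
    simp
  have hge : ε ^ m ≤ ((F j).roots.map fun r => ‖z₀ - r‖).prod := by
    have := ms_prod_le hε.le ((F j).roots.map fun r => ‖z₀ - r‖) ?_
    · rwa [Multiset.card_map, hcard] at this
    · intro a ha
      rw [Multiset.mem_map] at ha
      obtain ⟨r, hr, rfl⟩ := ha
      have hroot : (F j).eval r = 0 := by
        have := Polynomial.isRoot_of_mem_roots hr
        exact this
      have := hcon r hroot
      have habs2 : ‖z₀ - r‖ = ‖r - z₀‖ := by
        rw [← norm_neg]; congr 1; ring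
      rw [habs2]
      exact this
  rw [habs] at hj
  have : ‖c‖ * ε ^ m ≤ ‖c‖ *
      ((F j).roots.map fun r => ‖z₀ - r‖).prod :=
    mul_le_mul_of_nonneg_left hge hcabs.le
  linarith

end GB

namespace GC
open GA GA2 GA3 GB Filter
variable {n m : ℕ}

theorem roots_cL {p : MvPolynomial (Fin n) ℝ} {c x : Fin n → ℝ} {lam : Fin m → ℝ}
    (hc : MvPolynomial.eval c p ≠ 0) (hl : IsEigen m p c x lam) :
    (cL p (cv x) (cv c)).roots
      = Multiset.map (fun k => ((-lam k : ℝ) : ℂ)) Finset.univ.val := by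
  rw [cL_factor hl, roots_factor _ (by exact_mod_cast hc) _]

theorem exists_eigen {p : MvPolynomial (Fin n) ℝ} (hp : p.IsHomogeneous m)
    {c : Fin n → ℝ} (hc : MvPolynomial.eval c p ≠ 0) (x : Fin n → ℝ)
    (hreal : ∀ z ∈ (cL p (cv x) (cv c)).roots, z.im = 0) :
    ∃ lam : Fin m → ℝ, IsEigen m p c x lam := by
  have hcm : (cL p (cv x) (cv c)).coeff m = ((MvPolynomial.eval c p : ℝ) : ℂ) := by
    rw [coeff_cL_m hp, eval_pC_real]
  have hc' : ((MvPolynomial.eval c p : ℝ) : ℂ) ≠ 0 := by exact_mod_cast hc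
  have hdeg := natDegree_cL_le hp (cv x) (cv c)
  have hcard := card_roots_eq hc' hdeg hcm
  have hrep := rep_roots hc' hdeg hcm
  obtain ⟨f, hf⟩ := multiset_to_tuple hcard
  have hfk : ∀ k, f k = (((f k).re : ℝ) : ℂ) := by
    intro k
    have hmem : f k ∈ (cL p (cv x) (cv c)).roots := by
      rw [hf]
      exact Multiset.mem_map.mpr ⟨k, by simp, rfl⟩
    have him := hreal _ hmem
    apply Complex.ext
    · simp
    · simp [him]
  refine ⟨fun k => -((f k).re), ?_⟩
  intro t
  apply Complex.ofReal_injective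
  push_cast
  calc ((MvPolynomial.eval (t • c + x) p : ℝ) : ℂ)
      = Polynomial.eval (t:ℂ) (cL p (cv x) (cv c)) := (eval_cL_real p x c t).symm
    _ = ((MvPolynomial.eval c p : ℝ) : ℂ) * ∏ k, ((t:ℂ) - f k) := by
        conv_lhs => rw [← hrep, hf]
        rw [Polynomial.eval_mul, Polynomial.eval_C, Polynomial.eval_multiset_prod,
          Multiset.map_map, Multiset.map_map]
        congr 1
        rw [Finset.prod_eq_multiset_prod]
        congr 1
        apply Multiset.map_congr rfl
        intro k _
        simp
    _ = ((MvPolynomial.eval c p : ℝ) : ℂ) * ∏ k, ((t:ℂ) + -((f k).re : ℂ)) := by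
        congr 1
        apply Finset.prod_congr rfl
        intro k _
        conv_lhs => rw [hfk k]
        ring

/-- the real-root characterization of cone membership -/
def inCone (p : MvPolynomial (Fin n) ℝ) (c x : Fin n → ℝ) : Prop :=
  ∀ s : ℝ, 0 ≤ s → MvPolynomial.eval (s • c + x) p ≠ 0

theorem mem_cone_iff {p : MvPolynomial (Fin n) ℝ} {c : Fin n → ℝ}
    (hyp : IsHyperbolic m p c) {x : Fin n → ℝ} :
    x ∈ GardingCone m p c ↔ inCone p c x := by
  constructor
  · rintro ⟨lam, hl, hpos⟩ s hs
    rw [hl s]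
    apply mul_ne_zero hyp.1.ne'
    apply Finset.prod_ne_zero_iff.mpr
    intro k _
    have := hpos k
    positivity
  · intro hin
    obtain ⟨lam, hl⟩ := hyp.2 x
    refine ⟨lam, hl, ?_⟩
    intro k
    by_contra hk
    push_neg at hk
    have := hin (-lam k) (by linarith)
    rw [hl (-lam k)] at this
    apply this
    apply mul_eq_zero_of_right
    apply Finset.prod_eq_zero (Finset.mem_univ k)
    ring

end GC

namespace GD
open GA GA2 GA3 GB GC Filter
variable {n m : ℕ}

theorem eval_ne_of_im {p : MvPolynomial (Fin n) ℝ} {a : Fin n → ℝ}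
    (hyp : IsHyperbolic m p a) (y : Fin n → ℝ) {τ : ℂ} (hτ : τ.im ≠ 0) :
    MvPolynomial.eval (cv y + τ • cv a) (pC p) ≠ 0 := by
  obtain ⟨lam, hl⟩ := hyp.2 y
  rw [← eval_cL, cL_factor hl]
  simp only [Polynomial.eval_mul, Polynomial.eval_C, Polynomial.eval_prod,
    Polynomial.eval_sub, Polynomial.eval_X]
  apply mul_ne_zero
  · exact_mod_cast hyp.1.ne'
  · apply Finset.prod_ne_zero_iff.mpr
    intro k _ h0
    apply hτ
    have := congrArg Complex.im h0
    simpa using this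

noncomputable def Fam (p : MvPolynomial (Fin n) ℝ) (a b x : Fin n → ℝ) (T : ℝ) : Polynomial ℂ :=
  cL p (cv x + ((T : ℂ) * Complex.I) • cv a) (cv b)

theorem Fam_coeff_m {p : MvPolynomial (Fin n) ℝ} (hp : p.IsHomogeneous m)
    (a b x : Fin n → ℝ) (T : ℝ) :
    (Fam p a b x T).coeff m = ((MvPolynomial.eval b p : ℝ) : ℂ) := by
  rw [Fam, coeff_cL_m hp, eval_pC_real]

theorem Fam_natDegree_le {p : MvPolynomial (Fin n) ℝ} (hp : p.IsHomogeneous m)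
    (a b x : Fin n → ℝ) (T : ℝ) : (Fam p a b x T).natDegree ≤ m :=
  natDegree_cL_le hp _ _

theorem Fam_cont (p : MvPolynomial (Fin n) ℝ) (a b x : Fin n → ℝ) (k : ℕ) :
    Continuous fun T : ℝ => (Fam p a b x T).coeff k := by
  apply (coeff_cL_cont p (cv b) k).comp
  apply Continuous.add continuous_const
  exact (Complex.continuous_ofReal.mul continuous_const).smul continuous_const

theorem Fam_never_real {p : MvPolynomial (Fin n) ℝ} {a : Fin n → ℝ}
    (hyp : IsHyperbolic m p a) (b x : Fin n → ℝ) {T : ℝ} (hT : T ≠ 0) (t : ℝ) :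
    (Fam p a b x T).eval (t : ℂ) ≠ 0 := by
  rw [Fam, eval_cL]
  have hvec : cv x + ((T:ℂ) * Complex.I) • cv a + (t:ℂ) • cv b
      = cv (t • b + x) + ((T:ℂ) * Complex.I) • cv a := by
    funext i; simp [cv]; push_cast; ring
  rw [hvec]
  exact eval_ne_of_im hyp _ (by simp [hT])

theorem eval_pos_of_mem {p : MvPolynomial (Fin n) ℝ} {a : Fin n → ℝ}
    (hyp : IsHyperbolic m p a) {b : Fin n → ℝ} (hb : b ∈ GardingCone m p a) :
    0 < MvPolynomial.eval b p := by
  obtain ⟨lam, hl, hpos⟩ := hb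
  have h0 := hl 0
  rw [zero_smul, zero_add] at h0
  rw [h0]
  apply mul_pos hyp.1
  apply Finset.prod_pos
  intro k _
  simpa using hpos k

theorem root_base_neg {p : MvPolynomial (Fin n) ℝ} (hp : p.IsHomogeneous m)
    {a : Fin n → ℝ} (hyp : IsHyperbolic m p a) {b : Fin n → ℝ}
    (hb : b ∈ GardingCone m p a) {z : ℂ} (hz : (cL p (cv a) (cv b)).eval z = 0) :
    ∃ r : ℝ, r < 0 ∧ z = (r : ℂ) := by
  obtain ⟨lam, hl, hpos⟩ := hb
  have hz0 : z ≠ 0 := by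
    intro h0
    rw [h0, eval_cL] at hz
    rw [show cv a + (0:ℂ) • cv b = cv a by simp, eval_pC_real] at hz
    exact hyp.1.ne' (by exact_mod_cast hz)
  have h2 : (cL p (cv b) (cv a)).eval z⁻¹ = 0 := by
    rw [eval_cL] at hz ⊢
    have hvec : cv a + z • cv b = z • (cv b + z⁻¹ • cv a) := by
      funext i; simp [cv]; field_simp; ring
    rw [hvec, eval_smul_hom _ (pC_homog hp)] at hz
    rcases mul_eq_zero.mp hz with h | h
    · exact absurd h (pow_ne_zero _ hz0)
    · exact h
  have hne : cL p (cv b) (cv a) ≠ 0 := by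
    intro h0
    have := coeff_cL_m hp (cv b) (cv a)
    rw [h0, eval_pC_real] at this
    simp only [Polynomial.coeff_zero] at this
    exact hyp.1.ne' (by exact_mod_cast this.symm)
  have hmem : z⁻¹ ∈ (cL p (cv b) (cv a)).roots :=
    Polynomial.mem_roots'.mpr ⟨hne, h2⟩
  rw [roots_cL hyp.1.ne' hl, Multiset.mem_map] at hmem
  obtain ⟨k, -, hk⟩ := hmem
  refine ⟨-(lam k)⁻¹, by have := hpos k; simp; positivity, ?_⟩
  have hzz : z = (((-lam k : ℝ) : ℂ))⁻¹ := by
    rw [hk, inv_inv]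
  rw [hzz]
  push_cast
  rw [← neg_inv]

end GD

namespace GE
open GA GA2 GA3 GB GC GD Filter
variable {n m : ℕ}

theorem seed {p : MvPolynomial (Fin n) ℝ} (hp : p.IsHomogeneous m)
    {a b : Fin n → ℝ} (hyp : IsHyperbolic m p a) (hb : b ∈ GardingCone m p a)
    (x : Fin n → ℝ) :
    ∃ T₀ : ℝ, 0 < T₀ ∧ ∀ s : ℂ, (Fam p a b x T₀).eval s = 0 → s.im < 0 := by
  have hpb := eval_pos_of_mem hyp hb
  have hpbC : ((MvPolynomial.eval b p : ℝ) : ℂ) ≠ 0 := by exact_mod_cast hpb.ne'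
  by_contra hcon
  push_neg at hcon
  have hsel : ∀ j : ℕ, ∃ s : ℂ, (Fam p a b x ((j:ℝ)+1)).eval s = 0 ∧ 0 ≤ s.im := by
    intro j
    exact hcon ((j:ℝ)+1) (by positivity)
  choose s hs him using hsel
  set w : ℕ → ℂ := fun j => (((j:ℝ)+1 : ℝ) : ℂ) * Complex.I with hw
  have hw0 : ∀ j, w j ≠ 0 := by
    intro j
    apply mul_ne_zero _ Complex.I_ne_zero
    have : ((j:ℝ)+1) ≠ 0 := by positivity
    exact_mod_cast this
  set G : ℕ → Polynomial ℂ := fun j => cL p (cv a + (w j)⁻¹ • cv x) (cv b) with hG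
  have hu : ∀ j, (G j).eval ((w j)⁻¹ * s j) = 0 := by
    intro j
    rw [hG, eval_cL]
    have h0 := hs j
    rw [Fam, eval_cL] at h0
    have hvec : cv a + (w j)⁻¹ • cv x + ((w j)⁻¹ * s j) • cv b
        = (w j)⁻¹ • (cv x + ((((j:ℝ)+1 : ℝ):ℂ) * Complex.I) • cv a + (s j) • cv b) := by
      have hwj := hw0 j
      apply smul_right_injective (Fin n → ℂ) hwj
      simp only [smul_add, smul_smul, mul_inv_cancel₀ hwj, one_smul,
        mul_inv_cancel_left₀ hwj, ← hw]
      abel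
    rw [hvec, eval_smul_hom _ (pC_homog hp), h0, mul_zero]
  have hre : ∀ j, 0 ≤ ((w j)⁻¹ * s j).re := by
    intro j
    have hwinv : (w j)⁻¹ = ((((j:ℝ)+1)⁻¹ : ℝ) : ℂ) * (-Complex.I) := by
      rw [hw, mul_inv, Complex.inv_I]
      push_cast
      ring
    rw [hwinv, mul_assoc, Complex.re_ofReal_mul]
    have : (-Complex.I * s j).re = (s j).im := by
      simp [Complex.mul_re]
    rw [this]
    have h1 : (0:ℝ) ≤ (((j:ℝ)+1)⁻¹ : ℝ) := by positivity
    exact mul_nonneg h1 (him j)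
  have hq : Tendsto (fun j => cv a + (w j)⁻¹ • cv x) atTop (nhds (cv a)) := by
    have hwinv : (fun j : ℕ => (w j)⁻¹)
        = fun j : ℕ => ((1/((j:ℝ)+1) : ℝ) : ℂ) * (-Complex.I) := by
      funext j
      rw [hw, mul_inv, Complex.inv_I]
      push_cast
      ring
    have h1 : Tendsto (fun j : ℕ => (w j)⁻¹) atTop (nhds 0) := by
      rw [hwinv]
      have h2 : Tendsto (fun j : ℕ => ((1/((j:ℝ)+1) : ℝ) : ℂ)) atTop (nhds 0) := by
        have h3 := (Complex.continuous_ofReal.tendsto 0).comp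
          tendsto_one_div_add_atTop_nhds_zero_nat
        simpa only [Complex.ofReal_zero, Function.comp_def] using h3
      simpa using h2.mul_const (-Complex.I)
    have h4 := (h1.smul_const (cv x)).const_add (cv a)
    simpa using h4
  obtain ⟨z₀, hz₀C, hz₀⟩ := limroot (m := m) hpbC
    (fun j => natDegree_cL_le hp _ _)
    (fun j => by rw [coeff_cL_m hp, eval_pC_real])
    (natDegree_cL_le hp (cv a) (cv b))
    (fun k => ((coeff_cL_cont p (cv b) k).tendsto _).comp hq)
    hu (C := {z : ℂ | 0 ≤ z.re})
    (isClosed_le continuous_const Complex.continuous_re) hre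
  obtain ⟨r, hr, rfl⟩ := root_base_neg hp hyp hb hz₀
  have : (0:ℝ) ≤ r := by simpa using hz₀C
  linarith

end GE

namespace GF
open GA GA2 GA3 GB GC GD GE Filter
variable {n m : ℕ}

theorem star_lemma {p : MvPolynomial (Fin n) ℝ} (hp : p.IsHomogeneous m)
    {a b : Fin n → ℝ} (hyp : IsHyperbolic m p a) (hb : b ∈ GardingCone m p a)
    (x : Fin n → ℝ) {T : ℝ} (hT : 0 < T) :
    ∀ s : ℂ, (Fam p a b x T).eval s = 0 → s.im < 0 := by
  have hpb := eval_pos_of_mem hyp hb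
  have hpbC : ((MvPolynomial.eval b p : ℝ) : ℂ) ≠ 0 := by exact_mod_cast hpb.ne'
  obtain ⟨T₀, hT₀, hseed⟩ := seed hp hyp hb x
  set lo := min T T₀ with hlo'
  set hi := max T T₀ with hhi'
  have hlo : 0 < lo := lt_min hT hT₀
  set J := Set.Icc lo hi with hJ'
  set S := {T' | T' ∈ J ∧ ∀ s : ℂ, (Fam p a b x T').eval s = 0 → s.im < 0} with hS'
  set U := {T' | T' ∈ J ∧ ∃ s : ℂ, (Fam p a b x T').eval s = 0 ∧ 0 < s.im} with hU'
  have hconv : ∀ (Ts : ℕ → ℝ) (T' : ℝ), Tendsto Ts atTop (nhds T') →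
      ∀ k, Tendsto (fun j => (Fam p a b x (Ts j)).coeff k) atTop
        (nhds ((Fam p a b x T').coeff k)) :=
    fun Ts T' hT' k => ((Fam_cont p a b x k).tendsto T').comp hT'
  have hSclosed : IsClosed S := by
    apply IsSeqClosed.isClosed
    intro Ts T' hTs hTlim
    have hTJ : T' ∈ J := isClosed_Icc.isSeqClosed (fun j => (hTs j).1) hTlim
    refine ⟨hTJ, ?_⟩
    intro s hsroot
    by_contra hcon
    push_neg at hcon
    have hTpos : (0:ℝ) < T' := lt_of_lt_of_le hlo hTJ.1
    have hsim : s.im ≠ 0 := by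
      intro h0
      have hsre : s = ((s.re : ℝ) : ℂ) := Complex.ext rfl (by simp [h0])
      rw [hsre] at hsroot
      exact Fam_never_real hyp b x hTpos.ne' s.re hsroot
    have hsim' : 0 < s.im := lt_of_le_of_ne hcon (Ne.symm hsim)
    have hnr := nearroot (m := m) hpbC (fun j => Fam_natDegree_le hp a b x _)
      (fun j => Fam_coeff_m hp a b x _) (Fam_natDegree_le hp a b x T')
      (hconv Ts T' hTlim) hsroot hsim'
    obtain ⟨j, z, hz0, hzd⟩ := hnr.exists
    have hzneg : z.im < 0 := (hTs j).2 z hz0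
    have him : |z.im - s.im| ≤ ‖z - s‖ := by
      simpa using Complex.abs_im_le_norm (z - s)
    have := abs_lt.mp (lt_of_le_of_lt him hzd)
    linarith [this.1]
  have hUclosed : IsClosed U := by
    apply IsSeqClosed.isClosed
    intro Ts T' hTs hTlim
    have hTJ : T' ∈ J := isClosed_Icc.isSeqClosed (fun j => (hTs j).1) hTlim
    have hTpos : (0:ℝ) < T' := lt_of_lt_of_le hlo hTJ.1
    refine ⟨hTJ, ?_⟩
    choose s hs0 hsim using fun j => (hTs j).2
    obtain ⟨z₀, hz₀C, hz₀⟩ := limroot (m := m) hpbC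
      (fun j => Fam_natDegree_le hp a b x _)
      (fun j => Fam_coeff_m hp a b x _) (Fam_natDegree_le hp a b x T')
      (hconv Ts T' hTlim) hs0 (C := {z : ℂ | 0 ≤ z.im})
      (isClosed_le continuous_const Complex.continuous_im) (fun j => (hsim j).le)
    refine ⟨z₀, hz₀, ?_⟩
    have hz₀C' : (0:ℝ) ≤ z₀.im := hz₀C
    rcases eq_or_lt_of_le hz₀C' with h | h
    · exfalso
      have hzre : z₀ = ((z₀.re : ℝ) : ℂ) := Complex.ext rfl (by simp [← h])
      rw [hzre] at hz₀
      exact Fam_never_real hyp b x hTpos.ne' z₀.re hz₀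
    · exact h
  have hcover : J ⊆ S ∪ U := by
    intro T' hT'
    by_cases hTS : ∀ s : ℂ, (Fam p a b x T').eval s = 0 → s.im < 0
    · exact Or.inl ⟨hT', hTS⟩
    · push_neg at hTS
      obtain ⟨s, hs0, hs1⟩ := hTS
      have hTpos : (0:ℝ) < T' := lt_of_lt_of_le hlo hT'.1
      have hsim : s.im ≠ 0 := by
        intro h0
        have hsre : s = ((s.re : ℝ) : ℂ) := Complex.ext rfl (by simp [h0])
        rw [hsre] at hs0
        exact Fam_never_real hyp b x hTpos.ne' s.re hs0
      exact Or.inr ⟨hT', s, hs0, lt_of_le_of_ne hs1 (Ne.symm hsim)⟩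
  have hT₀S : T₀ ∈ S := ⟨⟨min_le_right _ _, le_max_right _ _⟩, hseed⟩
  have hJpre := isPreconnected_Icc (a := lo) (b := hi)
  rw [isPreconnected_closed_iff] at hJpre
  by_cases hU : (J ∩ U).Nonempty
  · exfalso
    have hS : (J ∩ S).Nonempty := ⟨T₀, hT₀S.1, hT₀S⟩
    obtain ⟨T', -, hT'S, hT'U⟩ := hJpre S U hSclosed hUclosed hcover hS hU
    obtain ⟨s, hs0, hs1⟩ := hT'U.2
    have := hT'S.2 s hs0
    linarith
  · have hTJ : T ∈ J := ⟨min_le_left _ _, le_max_left _ _⟩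
    rcases hcover hTJ with h | h
    · exact h.2
    · exact absurd ⟨T, hTJ, h⟩ hU

theorem no_upper_root {p : MvPolynomial (Fin n) ℝ} (hp : p.IsHomogeneous m)
    {a b : Fin n → ℝ} (hyp : IsHyperbolic m p a) (hb : b ∈ GardingCone m p a)
    (y : Fin n → ℝ) {s : ℂ} (hs : 0 < s.im)
    (hroot : (cL p (cv y) (cv b)).eval s = 0) : False := by
  have hpb := eval_pos_of_mem hyp hb
  have hpbC : ((MvPolynomial.eval b p : ℝ) : ℂ) ≠ 0 := by exact_mod_cast hpb.ne'
  have hF0 : Fam p a b y 0 = cL p (cv y) (cv b) := by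
    rw [Fam]
    congr 1
    funext i
    simp
  have hTlim : Tendsto (fun j : ℕ => 1/((j:ℝ)+1)) atTop (nhds 0) :=
    tendsto_one_div_add_atTop_nhds_zero_nat
  have hconv : ∀ k, Tendsto (fun j : ℕ => (Fam p a b y (1/((j:ℝ)+1))).coeff k) atTop
      (nhds ((cL p (cv y) (cv b)).coeff k)) := by
    intro k
    have := ((Fam_cont p a b y k).tendsto 0).comp hTlim
    rwa [hF0] at this
  have hnr := nearroot (m := m) hpbC
    (fun j => Fam_natDegree_le hp a b y _)
    (fun j => Fam_coeff_m hp a b y _)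
    (by rw [← hF0]; exact Fam_natDegree_le hp a b y 0)
    hconv hroot hs
  obtain ⟨j, z, hz0, hzd⟩ := hnr.exists
  have hzneg : z.im < 0 := star_lemma hp hyp hb y (by positivity) z hz0
  have him : |z.im - s.im| ≤ ‖z - s‖ := by
    simpa using Complex.abs_im_le_norm (z - s)
  have := abs_lt.mp (lt_of_le_of_lt him hzd)
  linarith [this.1]

theorem hyperbolic_of_mem {p : MvPolynomial (Fin n) ℝ} (hp : p.IsHomogeneous m)
    {a b : Fin n → ℝ} (hyp : IsHyperbolic m p a) (hb : b ∈ GardingCone m p a) :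
    IsHyperbolic m p b := by
  have hpb := eval_pos_of_mem hyp hb
  refine ⟨hpb, ?_⟩
  intro y
  apply exists_eigen hp hpb.ne' y
  intro z hzmem
  by_contra him
  have hzroot : Polynomial.eval z (cL p (cv y) (cv b)) = 0 :=
    (Polynomial.mem_roots'.mp hzmem).2
  rcases lt_trichotomy z.im 0 with h | h | h
  · have hconj := conj_root p y b hzroot
    apply no_upper_root hp hyp hb y (s := (starRingEnd ℂ) z) (by simpa using h) hconj
  · exact him h
  · exact no_upper_root hp hyp hb y h hzroot

end GF

namespace GG
open GA GA2 GA3 GB GC GD GE GF Filter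
variable {n m : ℕ}

theorem cv_cont : Continuous (cv : (Fin n → ℝ) → (Fin n → ℂ)) :=
  continuous_pi fun i => Complex.continuous_ofReal.comp (continuous_apply i)

theorem cL_ne_zero {p : MvPolynomial (Fin n) ℝ} (hp : p.IsHomogeneous m)
    {c : Fin n → ℝ} (hc : MvPolynomial.eval c p ≠ 0) (u : Fin n → ℂ) :
    cL p u (cv c) ≠ 0 := by
  intro h0
  have h1 := coeff_cL_m hp u (cv c)
  rw [h0, eval_pC_real] at h1
  simp only [Polynomial.coeff_zero] at h1
  exact hc (by exact_mod_cast h1.symm)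

theorem cone_open {p : MvPolynomial (Fin n) ℝ} (hp : p.IsHomogeneous m)
    {c : Fin n → ℝ} (hyp : IsHyperbolic m p c) : IsOpen (GardingCone m p c) := by
  rw [← isClosed_compl_iff]
  apply IsSeqClosed.isClosed
  intro xs x hxs hxlim
  simp only [Set.mem_compl_iff] at hxs ⊢
  have hpcC : ((MvPolynomial.eval c p : ℝ) : ℂ) ≠ 0 := by exact_mod_cast hyp.1.ne'
  have hsel : ∀ j, ∃ s : ℝ, 0 ≤ s ∧ MvPolynomial.eval (s • c + xs j) p = 0 := by
    intro j
    have := hxs j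
    rw [mem_cone_iff hyp] at this
    simp only [inCone, not_forall] at this
    obtain ⟨s, hs, h0⟩ := this
    exact ⟨s, hs, not_not.mp h0⟩
  choose sj hsj hsj0 using hsel
  have hroots : ∀ j, Polynomial.eval ((sj j : ℝ) : ℂ) (cL p (cv (xs j)) (cv c)) = 0 := by
    intro j
    rw [eval_cL_real, hsj0 j, Complex.ofReal_zero]
  have hconv : ∀ k, Tendsto (fun j => (cL p (cv (xs j)) (cv c)).coeff k) atTop
      (nhds ((cL p (cv x) (cv c)).coeff k)) := by
    intro k
    exact ((coeff_cL_cont p (cv c) k).tendsto _).comp ((cv_cont.tendsto x).comp hxlim)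
  obtain ⟨z₀, hz₀C, hz₀⟩ := limroot (m := m) hpcC
    (fun j => natDegree_cL_le hp _ _)
    (fun j => by rw [coeff_cL_m hp, eval_pC_real])
    (natDegree_cL_le hp (cv x) (cv c)) hconv hroots
    (C := {z : ℂ | z.im = 0 ∧ 0 ≤ z.re})
    ((isClosed_eq Complex.continuous_im continuous_const).inter
      (isClosed_le continuous_const Complex.continuous_re))
    (fun j => by simp [hsj j])
  rw [mem_cone_iff hyp]
  intro hin
  have hz₀re : z₀ = ((z₀.re : ℝ) : ℂ) := Complex.ext rfl (by simp [hz₀C.1])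
  apply hin z₀.re hz₀C.2
  apply Complex.ofReal_injective
  rw [← eval_cL_real, ← hz₀re, hz₀, Complex.ofReal_zero]

theorem cone_closed_in {p : MvPolynomial (Fin n) ℝ} (hp : p.IsHomogeneous m)
    {c : Fin n → ℝ} (hyp : IsHyperbolic m p c) (xs : ℕ → Fin n → ℝ) (x : Fin n → ℝ)
    (hxs : ∀ j, xs j ∈ GardingCone m p c) (hxlim : Tendsto xs atTop (nhds x))
    (hx0 : MvPolynomial.eval x p ≠ 0) : x ∈ GardingCone m p c := by
  have hpcC : ((MvPolynomial.eval c p : ℝ) : ℂ) ≠ 0 := by exact_mod_cast hyp.1.ne'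
  rw [mem_cone_iff hyp]
  intro s hs heval
  have hs0 : s ≠ 0 := by
    rintro rfl
    rw [zero_smul, zero_add] at heval
    exact hx0 heval
  have hspos : 0 < s := lt_of_le_of_ne hs (Ne.symm hs0)
  have hroot : Polynomial.eval ((s : ℝ) : ℂ) (cL p (cv x) (cv c)) = 0 := by
    rw [eval_cL_real, heval, Complex.ofReal_zero]
  have hconv : ∀ k, Tendsto (fun j => (cL p (cv (xs j)) (cv c)).coeff k) atTop
      (nhds ((cL p (cv x) (cv c)).coeff k)) := by
    intro k
    exact ((coeff_cL_cont p (cv c) k).tendsto _).comp ((cv_cont.tendsto x).comp hxlim)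
  have hnr := nearroot (m := m) hpcC
    (fun j => natDegree_cL_le hp _ _)
    (fun j => by rw [coeff_cL_m hp, eval_pC_real])
    (natDegree_cL_le hp (cv x) (cv c)) hconv hroot hspos
  obtain ⟨j, z, hz0, hzd⟩ := hnr.exists
  obtain ⟨lam, hl, hpos⟩ := hxs j
  have hmem := Polynomial.mem_roots'.mpr ⟨cL_ne_zero hp hyp.1.ne' (cv (xs j)), hz0⟩
  rw [roots_cL hyp.1.ne' hl, Multiset.mem_map] at hmem
  obtain ⟨k, -, hk⟩ := hmem
  rw [← hk] at hzd
  have habs : ‖((-lam k : ℝ) : ℂ) - ((s : ℝ) : ℂ)‖ = |(-lam k - s : ℝ)| := by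
    rw [← Complex.ofReal_sub, Complex.norm_real, Real.norm_eq_abs]
  rw [habs] at hzd
  have hlamk := hpos k
  rw [abs_of_nonpos (by linarith)] at hzd
  linarith

theorem cone_subset_ne {p : MvPolynomial (Fin n) ℝ} {c : Fin n → ℝ}
    (hyp : IsHyperbolic m p c) :
    GardingCone m p c ⊆ {x | MvPolynomial.eval x p ≠ 0} :=
  fun _ hx => (eval_pos_of_mem hyp hx).ne'

theorem cone_mem_self {p : MvPolynomial (Fin n) ℝ} {c : Fin n → ℝ}
    (hyp : IsHyperbolic m p c) (hp : p.IsHomogeneous m) : c ∈ GardingCone m p c := by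
  refine ⟨fun _ => 1, ?_, fun _ => one_pos⟩
  intro t
  have hvec : t • c + c = (t + 1) • c := by
    funext i; simp [add_smul]; ring
  rw [hvec, eval_smul_hom p hp]
  rw [Finset.prod_const, Finset.card_univ, Fintype.card_fin]
  ring

theorem cone_star {p : MvPolynomial (Fin n) ℝ} (hp : p.IsHomogeneous m)
    {c : Fin n → ℝ} (hyp : IsHyperbolic m p c) {x : Fin n → ℝ}
    (hx : x ∈ GardingCone m p c) : segment ℝ c x ⊆ GardingCone m p c := by
  rintro z ⟨θ, τ, hθ, hτ, hsum, rfl⟩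
  rw [mem_cone_iff hyp] at hx ⊢
  intro s hs
  rcases eq_or_lt_of_le hτ with h | h
  · have hθ1 : θ = 1 := by linarith
    subst hθ1
    rw [← h]
    have hvec : s • c + ((1:ℝ) • c + (0:ℝ) • x) = (s + 1) • c := by
      funext i; simp [add_smul]; ring
    rw [hvec, eval_smul_hom p hp]
    apply mul_ne_zero (pow_ne_zero _ (by positivity)) hyp.1.ne'
  · have hvec : s • c + (θ • c + τ • x) = τ • (((s + θ)/τ) • c + x) := by
      funext i
      simp only [Pi.add_apply, Pi.smul_apply, smul_eq_mul]
      field_simp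
      ring
    rw [hvec, eval_smul_hom p hp]
    apply mul_ne_zero (pow_ne_zero _ h.ne')
    exact hx _ (div_nonneg (by linarith) h.le)

theorem cone_preconnected {p : MvPolynomial (Fin n) ℝ} (hp : p.IsHomogeneous m)
    {c : Fin n → ℝ} (hyp : IsHyperbolic m p c) :
    IsPreconnected (GardingCone m p c) :=
  isPreconnected_of_forall c fun y hy =>
    ⟨segment ℝ c y, cone_star hp hyp hy, left_mem_segment ℝ c y, right_mem_segment ℝ c y,
      (convex_segment c y).isPreconnected⟩

theorem cone_eq_component {p : MvPolynomial (Fin n) ℝ} (hp : p.IsHomogeneous m)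
    {c : Fin n → ℝ} (hyp : IsHyperbolic m p c) :
    GardingCone m p c = connectedComponentIn {x | MvPolynomial.eval x p ≠ 0} c := by
  set t := {x : Fin n → ℝ | MvPolynomial.eval x p ≠ 0} with ht
  have htopen : IsOpen t := by
    have h1 : t = (fun x : Fin n → ℝ => MvPolynomial.eval x p) ⁻¹' {y : ℝ | y ≠ 0} := rfl
    rw [h1]
    exact isOpen_ne.preimage (MvPolynomial.continuous_eval p)
  have hct : c ∈ t := hyp.1.ne'
  apply Set.Subset.antisymm
  · exact (cone_preconnected hp hyp).subset_connectedComponentIn (cone_mem_self hyp hp)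
      (cone_subset_ne hyp)
  · have hvopen : IsOpen (t \ closure (GardingCone m p c)) := htopen.sdiff isClosed_closure
    apply IsPreconnected.subset_left_of_subset_union (cone_open hp hyp) hvopen
    · exact Set.disjoint_left.mpr fun y hy h2 => h2.2 (subset_closure hy)
    · intro y hy
      have hyt : y ∈ t := connectedComponentIn_subset t c hy
      by_cases hcl : y ∈ closure (GardingCone m p c)
      · left
        obtain ⟨xs, hxs, hxlim⟩ := mem_closure_iff_seq_limit.mp hcl
        exact cone_closed_in hp hyp xs y hxs hxlim hyt
      · right
        exact ⟨hyt, hcl⟩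
    · exact ⟨c, mem_connectedComponentIn hct, cone_mem_self hyp hp⟩
    · exact isPreconnected_connectedComponentIn

theorem cone_eq {p : MvPolynomial (Fin n) ℝ} (hp : p.IsHomogeneous m)
    {a b : Fin n → ℝ} (hyp : IsHyperbolic m p a) (hb : b ∈ GardingCone m p a) :
    GardingCone m p a = GardingCone m p b := by
  have hypb := hyperbolic_of_mem hp hyp hb
  rw [cone_eq_component hp hyp, cone_eq_component hp hypb]
  apply connectedComponentIn_eq
  rw [← cone_eq_component hp hyp]
  exact hb

theorem cone_convex {p : MvPolynomial (Fin n) ℝ} (hp : p.IsHomogeneous m)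
    {a : Fin n → ℝ} (hyp : IsHyperbolic m p a) : Convex ℝ (GardingCone m p a) := by
  intro x hx y hy θ τ hθ hτ hsum
  have hypx := hyperbolic_of_mem hp hyp hx
  have hxx := cone_eq hp hyp hx
  rw [hxx] at hy ⊢
  exact cone_star hp hypx hy ⟨θ, τ, hθ, hτ, hsum, rfl⟩

end GG

namespace GH
open GA GA2 GA3 GB GC GD GE GF GG Filter
variable {n m : ℕ}

theorem eigen_of_prod_eq {p : MvPolynomial (Fin n) ℝ} {a x : Fin n → ℝ} {lam mu : Fin m → ℝ}
    (hl : IsEigen m p a x lam) (h : ∀ t : ℝ, ∏ k, (t + lam k) = ∏ k, (t + mu k)) :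
    IsEigen m p a x mu := fun t => by rw [hl t, h t]

theorem eigen_sort {p : MvPolynomial (Fin n) ℝ} {a x : Fin n → ℝ} {lam : Fin m → ℝ}
    (hl : IsEigen m p a x lam) : IsEigen m p a x (lam ∘ Tuple.sort lam) :=
  eigen_of_prod_eq hl fun t => (Equiv.prod_comp (Tuple.sort lam) (fun k => t + lam k)).symm

theorem roots_factor_real (r : Fin m → ℝ) :
    (∏ k, (Polynomial.X - Polynomial.C (r k))).roots = Multiset.map r Finset.univ.val := by
  rw [Finset.prod_eq_multiset_prod]
  have h2 : (Multiset.map (fun k => Polynomial.X - Polynomial.C (r k)) Finset.univ.val)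
      = Multiset.map (fun a => Polynomial.X - Polynomial.C a)
          (Multiset.map r Finset.univ.val) := by
    rw [Multiset.map_map]; rfl
  rw [h2, Polynomial.roots_multiset_prod_X_sub_C]

theorem eigen_multiset {p : MvPolynomial (Fin n) ℝ} {a : Fin n → ℝ}
    (ha : MvPolynomial.eval a p ≠ 0) {x : Fin n → ℝ} {lam mu : Fin m → ℝ}
    (hl : IsEigen m p a x lam) (hμ : IsEigen m p a x mu) :
    Multiset.map lam Finset.univ.val = Multiset.map mu Finset.univ.val := by
  have hprod : ∀ t : ℝ, ∏ k, (t + lam k) = ∏ k, (t + mu k) := by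
    intro t
    apply mul_left_cancel₀ ha
    rw [← hl t, ← hμ t]
  have hpoly : (∏ k, (Polynomial.X - Polynomial.C (-lam k)))
      = ∏ k, (Polynomial.X - Polynomial.C (-mu k)) := by
    apply Polynomial.funext
    intro t
    simp only [Polynomial.eval_prod, Polynomial.eval_sub, Polynomial.eval_X, Polynomial.eval_C,
      sub_neg_eq_add]
    exact hprod t
  have hroots := congrArg Polynomial.roots hpoly
  rw [roots_factor_real, roots_factor_real] at hroots
  have := congrArg (Multiset.map (fun r : ℝ => -r)) hroots
  rw [Multiset.map_map, Multiset.map_map] at this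
  simpa using this

theorem monotone_eigen_eq {p : MvPolynomial (Fin n) ℝ} {a : Fin n → ℝ}
    (ha : MvPolynomial.eval a p ≠ 0) {x : Fin n → ℝ} {lam mu : Fin m → ℝ}
    (hml : Monotone lam) (hl : IsEigen m p a x lam)
    (hmμ : Monotone mu) (hμ : IsEigen m p a x mu) : lam = mu := by
  have hms := eigen_multiset ha hl hμ
  have huniv : (Finset.univ.val : Multiset (Fin m)) = ↑(List.finRange m) := rfl
  rw [huniv, Multiset.map_coe, Multiset.map_coe, ← List.ofFn_eq_map, ← List.ofFn_eq_map] at hms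
  have hperm : (List.ofFn lam).Perm (List.ofFn mu) := Multiset.coe_eq_coe.mp hms
  exact List.ofFn_injective
    (List.Perm.eq_of_sortedLE hml.sortedLE_ofFn hmμ.sortedLE_ofFn hperm)

theorem ordEig_spec {p : MvPolynomial (Fin n) ℝ} {a : Fin n → ℝ}
    (hyp : IsHyperbolic m p a) (x : Fin n → ℝ) :
    Monotone (ordEig m p a x) ∧ IsEigen m p a x (ordEig m p a x) := by
  have hex : ∃ lam : Fin m → ℝ, Monotone lam ∧ IsEigen m p a x lam := by
    obtain ⟨lam, hl⟩ := hyp.2 x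
    exact ⟨lam ∘ Tuple.sort lam, Tuple.monotone_sort lam, eigen_sort hl⟩
  rw [ordEig, dif_pos hex]
  exact hex.choose_spec

theorem ordEig_unique {p : MvPolynomial (Fin n) ℝ} {a : Fin n → ℝ}
    (hyp : IsHyperbolic m p a) {x : Fin n → ℝ} {lam : Fin m → ℝ}
    (hmono : Monotone lam) (hl : IsEigen m p a x lam) : ordEig m p a x = lam :=
  monotone_eigen_eq hyp.1.ne' (ordEig_spec hyp x).1 (ordEig_spec hyp x).2 hmono hl

theorem eigen_shift {p : MvPolynomial (Fin n) ℝ} {a x : Fin n → ℝ} {lam : Fin m → ℝ}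
    (hl : IsEigen m p a x lam) (c : ℝ) :
    IsEigen m p a (x + c • a) (fun k => lam k + c) := by
  intro t
  have hvec : t • a + (x + c • a) = (t + c) • a + x := by
    funext i; simp [add_smul]; ring
  rw [hvec, hl (t + c)]
  congr 1
  apply Finset.prod_congr rfl
  intro k _
  ring

theorem eigen_smul {p : MvPolynomial (Fin n) ℝ} (hp : p.IsHomogeneous m)
    {a x : Fin n → ℝ} {lam : Fin m → ℝ}
    (hl : IsEigen m p a x lam) {c : ℝ} (hc : 0 < c) :
    IsEigen m p a (c • x) (fun k => c * lam k) := by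
  intro t
  have hvec : t • a + c • x = c • ((t/c) • a + x) := by
    funext i
    simp only [Pi.add_apply, Pi.smul_apply, smul_eq_mul]
    field_simp
  rw [hvec, eval_smul_hom p hp, hl (t/c)]
  rw [show (c : ℝ) ^ m = ∏ _k : Fin m, c by
    rw [Finset.prod_const, Finset.card_univ, Fintype.card_fin]]
  rw [mul_comm, mul_assoc, ← Finset.prod_mul_distrib]
  congr 1
  apply Finset.prod_congr rfl
  intro k _
  field_simp

theorem eigen_neg {p : MvPolynomial (Fin n) ℝ} (hp : p.IsHomogeneous m)
    {a x : Fin n → ℝ} {lam : Fin m → ℝ} (hl : IsEigen m p a x lam) :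
    IsEigen m p a (-x) (fun k => -lam k) := by
  intro t
  have hvec : t • a + -x = (-1 : ℝ) • ((-t) • a + x) := by
    funext i; simp; ring
  rw [hvec, eval_smul_hom p hp, hl (-t)]
  rw [show ((-1 : ℝ)) ^ m = ∏ _k : Fin m, (-1 : ℝ) by
    rw [Finset.prod_const, Finset.card_univ, Fintype.card_fin]]
  rw [mul_comm, mul_assoc, ← Finset.prod_mul_distrib]
  congr 1
  apply Finset.prod_congr rfl
  intro k _
  ring

theorem eigen_zero {p : MvPolynomial (Fin n) ℝ} (hp : p.IsHomogeneous m)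
    {a : Fin n → ℝ} (ha : MvPolynomial.eval a p ≠ 0) :
    IsEigen m p a 0 (fun _ => (0:ℝ)) := by
  intro t
  have hvec : t • a + 0 = t • a := by simp
  rw [hvec, eval_smul_hom p hp]
  simp [Finset.prod_const, Finset.card_univ, mul_comm]

end GH

namespace GI
open GA GA2 GA3 GB GC GD GE GF GG GH Filter
variable {n m : ℕ} {p : MvPolynomial (Fin n) ℝ} {a : Fin n → ℝ}

theorem ordEig_shift (hyp : IsHyperbolic m p a) (x : Fin n → ℝ) (c : ℝ) (k : Fin m) :
    ordEig m p a (x + c • a) k = ordEig m p a x k + c := by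
  have h := ordEig_unique hyp (lam := fun k => ordEig m p a x k + c)
    (fun i j hij => by
      have := (ordEig_spec hyp x).1 hij
      simpa using this)
    (eigen_shift (ordEig_spec hyp x).2 c)
  rw [h]

theorem ordEig_smul (hp : p.IsHomogeneous m) (hyp : IsHyperbolic m p a)
    (x : Fin n → ℝ) {c : ℝ} (hc : 0 < c) (k : Fin m) :
    ordEig m p a (c • x) k = c * ordEig m p a x k := by
  have h := ordEig_unique hyp (lam := fun k => c * ordEig m p a x k)
    (fun i j hij => mul_le_mul_of_nonneg_left ((ordEig_spec hyp x).1 hij) hc.le)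
    (eigen_smul hp (ordEig_spec hyp x).2 hc)
  rw [h]

theorem ordEig_neg (hp : p.IsHomogeneous m) (hyp : IsHyperbolic m p a)
    (x : Fin n → ℝ) (k : Fin m) :
    ordEig m p a (-x) k = -(ordEig m p a x (Fin.rev k)) := by
  have hmono : Monotone (fun k : Fin m => -(ordEig m p a x (Fin.rev k))) := by
    intro i j hij
    simp only [neg_le_neg_iff]
    exact (ordEig_spec hyp x).1 (Fin.rev_le_rev.mpr hij)
  have heig : IsEigen m p a (-x) (fun k => -(ordEig m p a x (Fin.rev k))) := by
    apply eigen_of_prod_eq (eigen_neg hp (ordEig_spec hyp x).2)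
    intro t
    have := Equiv.prod_comp Fin.revPerm (fun k : Fin m => t + -(ordEig m p a x k))
    simpa using this.symm
  rw [ordEig_unique hyp hmono heig]

theorem mem_iff_min (hm : 0 < m) (hyp : IsHyperbolic m p a) (x : Fin n → ℝ) :
    x ∈ GardingCone m p a ↔ 0 < ordEig m p a x ⟨0, hm⟩ := by
  constructor
  · rintro ⟨lam, hl, hpos⟩
    have hms := eigen_multiset hyp.1.ne' (ordEig_spec hyp x).2 hl
    have hmem : ordEig m p a x ⟨0, hm⟩ ∈ Multiset.map lam Finset.univ.val := by
      rw [← hms]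
      exact Multiset.mem_map_of_mem _ (Finset.mem_val.mpr (Finset.mem_univ _))
    rw [Multiset.mem_map] at hmem
    obtain ⟨k, -, hk⟩ := hmem
    rw [← hk]
    exact hpos k
  · intro hpos
    refine ⟨ordEig m p a x, (ordEig_spec hyp x).2, ?_⟩
    intro k
    exact lt_of_lt_of_le hpos ((ordEig_spec hyp x).1 (by simp [Fin.le_def]))

theorem mem_smul (hp : p.IsHomogeneous m) {x : Fin n → ℝ}
    (hx : x ∈ GardingCone m p a) {c : ℝ} (hc : 0 < c) :
    c • x ∈ GardingCone m p a := by
  obtain ⟨lam, hl, hpos⟩ := hx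
  exact ⟨fun k => c * lam k, eigen_smul hp hl hc, fun k => mul_pos hc (hpos k)⟩

theorem cone_add (hp : p.IsHomogeneous m) (hyp : IsHyperbolic m p a)
    {x y : Fin n → ℝ} (hx : x ∈ GardingCone m p a) (hy : y ∈ GardingCone m p a) :
    x + y ∈ GardingCone m p a := by
  have h2 := cone_convex hp hyp hx hy (by norm_num : (0:ℝ) ≤ 1/2)
    (by norm_num : (0:ℝ) ≤ 1/2) (by norm_num)
  have h3 := mem_smul hp h2 (c := 2) two_pos
  have h4 : (2:ℝ) • ((1/2:ℝ) • x + (1/2:ℝ) • y) = x + y := by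
    funext i; simp; ring
  rwa [h4] at h3

theorem lmin_superadd (hm : 0 < m) (hp : p.IsHomogeneous m) (hyp : IsHyperbolic m p a)
    (x y : Fin n → ℝ) :
    ordEig m p a x ⟨0, hm⟩ + ordEig m p a y ⟨0, hm⟩ ≤ ordEig m p a (x + y) ⟨0, hm⟩ := by
  set f : (Fin n → ℝ) → ℝ := fun z => ordEig m p a z ⟨0, hm⟩ with hf
  have key : ∀ ε : ℝ, 0 < ε → f x + f y - 2*ε < f (x + y) := by
    intro ε hε
    have hx' : x + (ε - f x) • a ∈ GardingCone m p a := by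
      rw [mem_iff_min hm hyp, ordEig_shift hyp]
      simp only [hf]
      linarith
    have hy' : y + (ε - f y) • a ∈ GardingCone m p a := by
      rw [mem_iff_min hm hyp, ordEig_shift hyp]
      simp only [hf]
      linarith
    have hsum := cone_add hp hyp hx' hy'
    have hvec : (x + (ε - f x) • a) + (y + (ε - f y) • a)
        = (x + y) + (2*ε - f x - f y) • a := by
      funext i; simp; ring
    rw [hvec, mem_iff_min hm hyp, ordEig_shift hyp] at hsum
    simp only [hf] at hsum ⊢
    linarith
  by_contra hcon
  push_neg at hcon
  have := key ((f x + f y - f (x+y))/2) (by simp only [hf] at hcon ⊢; linarith)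
  simp only [hf] at hcon this
  linarith

theorem lmin_concave (hm : 0 < m) (hp : p.IsHomogeneous m) (hyp : IsHyperbolic m p a) :
    ConcaveOn ℝ Set.univ (fun x : Fin n → ℝ => ordEig m p a x ⟨0, hm⟩) := by
  refine ⟨convex_univ, ?_⟩
  intro x _ y _ θ τ hθ hτ hsum
  simp only [smul_eq_mul]
  rcases eq_or_lt_of_le hθ with h0 | hθpos
  · have hτ1 : τ = 1 := by linarith
    rw [← h0, hτ1]
    simp
  rcases eq_or_lt_of_le hτ with h1 | hτpos
  · have hθ1 : θ = 1 := by linarith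
    rw [← h1, hθ1]
    simp
  calc θ * ordEig m p a x ⟨0, hm⟩ + τ * ordEig m p a y ⟨0, hm⟩
      = ordEig m p a (θ • x) ⟨0, hm⟩ + ordEig m p a (τ • y) ⟨0, hm⟩ := by
        rw [ordEig_smul hp hyp _ hθpos, ordEig_smul hp hyp _ hτpos]
    _ ≤ _ := lmin_superadd hm hp hyp _ _

theorem lmax_convex (hm : 0 < m) (hp : p.IsHomogeneous m) (hyp : IsHyperbolic m p a) :
    ConvexOn ℝ Set.univ
      (fun x : Fin n → ℝ => ordEig m p a x ⟨m - 1, Nat.sub_lt hm one_pos⟩) := by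
  have hrev : Fin.rev ⟨0, hm⟩ = (⟨m - 1, Nat.sub_lt hm one_pos⟩ : Fin m) := by
    apply Fin.ext
    simp [Fin.val_rev]
  have hmax : ∀ z : Fin n → ℝ, ordEig m p a z ⟨m - 1, Nat.sub_lt hm one_pos⟩
      = -(ordEig m p a (-z) ⟨0, hm⟩) := by
    intro z
    rw [ordEig_neg hp hyp z ⟨0, hm⟩, hrev, neg_neg]
  refine ⟨convex_univ, ?_⟩
  intro x _ y _ θ τ hθ hτ hsum
  simp only [hmax, smul_eq_mul]
  have h2 : -(θ • x + τ • y) = θ • (-x) + τ • (-y) := by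
    funext i; simp; ring
  rw [h2]
  have := (lmin_concave hm hp hyp).2 (Set.mem_univ (-x)) (Set.mem_univ (-y)) hθ hτ hsum
  simp only [smul_eq_mul] at this
  linarith

end GI


end GardingAux

/-- (a) the Gårding cone is convex; (b) `λ_min = λ↑₁` is concave;
(c) `λ_max = λ↑ₘ` is convex. -/
theorem garding_cone_convex_min_concave_max_convex
    {n m : ℕ} (hm : 0 < m) (p : MvPolynomial (Fin n) ℝ) (hp : p.IsHomogeneous m)
    (a : Fin n → ℝ) (hhyp : IsHyperbolic m p a) :
    Convex ℝ (GardingCone m p a) ∧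
    ConcaveOn ℝ Set.univ (fun x : Fin n → ℝ => ordEig m p a x ⟨0, hm⟩) ∧
    ConvexOn ℝ Set.univ
      (fun x : Fin n → ℝ => ordEig m p a x ⟨m - 1, Nat.sub_lt hm one_pos⟩) := by
  exact ⟨GG.cone_convex hp hhyp, GI.lmin_concave hm hp hhyp, GI.lmax_convex hm hp hhyp⟩
end

section
/- Suppose (p_j) is a sequence of homogeneous polynomials of degree m on ℝⁿ, each a-hyperbolic, and suppose p is a homogeneous polynomial of degree m such that p_j → p pointwise on ℝⁿ (equivalently, coefficientwise). If p(a) ≠ 0, then p(a) > 0 and p is a-hyperbolic. -/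
open MvPolynomial

lemma abs_root_le {m : ℕ} (hm : 1 ≤ m) (R : Polynomial ℝ) (hR : R.Monic)
    (hdeg : R.natDegree = m) {z : ℝ} (hz : R.eval z = 0) :
    |z| ≤ max 1 (∑ i ∈ Finset.range m, |R.coeff i|) := by
  by_contra h
  push_neg at h
  have h1 : 1 < |z| := lt_of_le_of_lt (le_max_left _ _) h
  have hS : ∑ i ∈ Finset.range m, |R.coeff i| < |z| := lt_of_le_of_lt (le_max_right _ _) h
  have heval : R.eval z = ∑ i ∈ Finset.range (m + 1), R.coeff i * z ^ i := by
    rw [Polynomial.eval_eq_sum_range, hdeg]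
  rw [Finset.sum_range_succ] at heval
  have hcm : R.coeff m = 1 := by rw [← hdeg]; exact hR.coeff_natDegree
  have hzm : z ^ m = -∑ i ∈ Finset.range m, R.coeff i * z ^ i := by
    rw [hz, hcm] at heval; linarith
  have hb : |z| ^ m ≤ (∑ i ∈ Finset.range m, |R.coeff i|) * |z| ^ (m - 1) := by
    calc |z| ^ m = |z ^ m| := (abs_pow z m).symm
      _ = |∑ i ∈ Finset.range m, R.coeff i * z ^ i| := by rw [hzm, abs_neg]
      _ ≤ ∑ i ∈ Finset.range m, |R.coeff i * z ^ i| := Finset.abs_sum_le_sum_abs _ _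
      _ ≤ ∑ i ∈ Finset.range m, |R.coeff i| * |z| ^ (m - 1) := by
          refine Finset.sum_le_sum fun i hi => ?_
          rw [abs_mul, abs_pow]
          exact mul_le_mul_of_nonneg_left
            (pow_le_pow_right₀ h1.le (by simp at hi; omega)) (abs_nonneg _)
      _ = _ := by rw [← Finset.sum_mul]
  have hpow : |z| ^ m = |z| * |z| ^ (m - 1) := by
    rw [← pow_succ']
    congr 1
    omega
  have hzpos : 0 < |z| ^ (m - 1) := pow_pos (lt_trans one_pos h1) _
  rw [hpow] at hb
  have := le_of_mul_le_mul_right hb hzpos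
  linarith


/-- a pointwise limit of `a`-hyperbolic polynomials of degree `m`, which is
homogeneous of degree `m` and does not vanish at `a`, is positive at `a` and `a`-hyperbolic. -/
theorem limit_of_hyperbolic_is_hyperbolic
    {n m : ℕ} (hm : 1 ≤ m) (P : ℕ → MvPolynomial (Fin n) ℝ)
    (hP : ∀ j, (P j).IsHomogeneous m)
    (a : Fin n → ℝ) (hPa : ∀ j, IsHyperbolic m (P j) a)
    (p : MvPolynomial (Fin n) ℝ) (hp : p.IsHomogeneous m)
    (hconv : ∀ x : Fin n → ℝ,
      Filter.Tendsto (fun j => eval x (P j)) Filter.atTop (nhds (eval x p)))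
    (ha : eval a p ≠ 0) :
    0 < eval a p ∧ IsHyperbolic m p a := by
  have hc : Filter.Tendsto (fun j => eval a (P j)) Filter.atTop (nhds (eval a p)) := hconv a
  have hge : 0 ≤ eval a p := ge_of_tendsto' hc fun j => (hPa j).1.le
  have hpos : 0 < eval a p := hge.lt_of_ne (Ne.symm ha)
  refine ⟨hpos, hpos, fun x => ?_⟩
  choose lam hlam using fun j => (hPa j).2 x
  set c : ℕ → ℝ := fun j => eval a (P j) with hcdef
  set R : ℕ → Polynomial ℝ :=
    fun j => ∏ k : Fin m, (Polynomial.X + Polynomial.C (lam j k)) with hRdef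
  have hRmonic : ∀ j, (R j).Monic :=
    fun j => Polynomial.monic_prod_of_monic _ _ fun k _ => Polynomial.monic_X_add_C _
  have hRdeg : ∀ j, (R j).natDegree = m := by
    intro j
    rw [hRdef]
    rw [Polynomial.natDegree_prod_of_monic _ _ fun k _ => Polynomial.monic_X_add_C _]
    simp [Polynomial.natDegree_X_add_C]
  have hReval : ∀ j (t : ℝ), (R j).eval t = ∏ k, (t + lam j k) := by
    intro j t
    simp [hRdef, Polynomial.eval_prod]
  set Q : ℕ → Polynomial ℝ := fun j => Polynomial.C (c j) * R j with hQdef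
  have hQeval : ∀ j (t : ℝ), (Q j).eval t = eval (t • a + x) (P j) := by
    intro j t
    rw [hQdef]
    simp only [Polynomial.eval_mul, Polynomial.eval_C, hReval]
    exact (hlam j t).symm
  have hQdeg : ∀ j, (Q j).degree < ((Finset.range (m + 1)).card : ℕ) := by
    intro j
    have hle : (Q j).degree ≤ (m : ℕ) := by
      refine le_trans (Polynomial.degree_mul_le _ _) ?_
      have h2 : (R j).degree ≤ (m : ℕ) := by
        rw [← hRdeg j]; exact Polynomial.degree_le_natDegree
      calc (Polynomial.C (c j)).degree + (R j).degree ≤ 0 + (m : ℕ) :=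
            add_le_add Polynomial.degree_C_le h2
        _ = (m : ℕ) := zero_add _
    refine lt_of_le_of_lt hle ?_
    rw [Finset.card_range]
    exact_mod_cast Nat.lt_succ_self m
  have hinj : Set.InjOn (fun i : ℕ => (i : ℝ)) (Finset.range (m + 1)) :=
    fun i _ j _ h => Nat.cast_injective h
  have hrw : ∀ j (i : ℕ), (Q j).coeff i = ∑ t ∈ Finset.range (m + 1),
      eval ((t : ℝ) • a + x) (P j) *
        (Lagrange.basis (Finset.range (m + 1)) (fun i : ℕ => (i : ℝ)) t).coeff i := by
    intro j i
    conv_lhs => rw [Lagrange.eq_interpolate hinj (hQdeg j)]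
    rw [Lagrange.interpolate_apply, Polynomial.finset_sum_coeff]
    refine Finset.sum_congr rfl fun t _ => ?_
    rw [Polynomial.coeff_C_mul, hQeval]
  have hQcoeff : ∀ i : ℕ, ∃ L : ℝ,
      Filter.Tendsto (fun j => (Q j).coeff i) Filter.atTop (nhds L) := by
    intro i
    have h := tendsto_finset_sum (Finset.range (m + 1))
      (fun t (_ : t ∈ Finset.range (m + 1)) => (hconv ((t : ℝ) • a + x)).mul_const
        ((Lagrange.basis (Finset.range (m + 1)) (fun i : ℕ => (i : ℝ)) t).coeff i))
    exact ⟨_, h.congr fun j => (hrw j i).symm⟩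
  have hcpos : ∀ j, 0 < c j := fun j => (hPa j).1
  have hRcoeff : ∀ i : ℕ, ∃ L : ℝ,
      Filter.Tendsto (fun j => (R j).coeff i) Filter.atTop (nhds L) := by
    intro i
    obtain ⟨L, hL⟩ := hQcoeff i
    refine ⟨L / eval a p, Filter.Tendsto.congr (fun j => ?_) (hL.div hc ha)⟩
    rw [hQdef]
    simp only [Polynomial.coeff_C_mul, Pi.div_apply]
    field_simp [(hcpos j).ne']
  choose L hL using hRcoeff
  set S : ℕ → ℝ := fun j => ∑ i ∈ Finset.range m, |(R j).coeff i| with hSdef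
  have hStend : Filter.Tendsto S Filter.atTop (nhds (∑ i ∈ Finset.range m, |L i|)) :=
    tendsto_finset_sum _ fun i _ => (hL i).abs
  obtain ⟨M₀, hM₀⟩ := hStend.bddAbove_range
  have hM₀' : ∀ j, S j ≤ M₀ := fun j => hM₀ ⟨j, rfl⟩
  set M : ℝ := max 1 M₀ with hMdef
  have hbound : ∀ j k, |lam j k| ≤ M := by
    intro j k
    have hroot : (R j).eval (-(lam j k)) = 0 := by
      rw [hReval]
      exact Finset.prod_eq_zero (Finset.mem_univ k) (by ring)
    have := abs_root_le hm (R j) (hRmonic j) (hRdeg j) hroot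
    rw [abs_neg] at this
    exact this.trans (max_le_max le_rfl (hM₀' j))
  have hMnn : (0 : ℝ) ≤ M := le_trans zero_le_one (le_max_left _ _)
  have hmem : ∀ j, lam j ∈ Metric.closedBall (0 : Fin m → ℝ) M := by
    intro j
    rw [Metric.mem_closedBall, dist_zero_right]
    refine (pi_norm_le_iff_of_nonneg hMnn).mpr fun k => ?_
    simpa using hbound j k
  obtain ⟨μ, -, φ, hφ, hμ⟩ :=
    (isCompact_closedBall (0 : Fin m → ℝ) M).tendsto_subseq hmem
  refine ⟨μ, fun t => ?_⟩
  have h1 : Filter.Tendsto (fun j => eval (t • a + x) (P (φ j))) Filter.atTop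
      (nhds (eval (t • a + x) p)) := (hconv _).comp hφ.tendsto_atTop
  have h2 : Filter.Tendsto (fun j => c (φ j) * ∏ k, (t + lam (φ j) k)) Filter.atTop
      (nhds (eval a p * ∏ k, (t + μ k))) := by
    refine (hc.comp hφ.tendsto_atTop).mul (tendsto_finset_prod _ fun k _ => ?_)
    exact tendsto_const_nhds.add (((continuous_apply k).tendsto μ).comp hμ)
  exact tendsto_nhds_unique h1 (h2.congr fun j => (hlam (φ j) t).symm)
end

section
/- Suppose p is a-hyperbolic with Gårding cone Γ, and let E = closure(Γ) ∩ (−closure(Γ)) be the edge of Γ. Then the following four sets coincide: (i) E; (ii) the null set of p, {x ∈ ℝⁿ : all a-eigenvalues of x vanish, i.e. p(t·a + x) = p(a)·tᵐ for all t}; (iii) the linearity set of p, {x ∈ ℝⁿ : p(b + t·x) = p(b) for all t ∈ ℝ and all b ∈ ℝⁿ}; (iv) {x ∈ ℝⁿ : the directional derivative p′_x vanishes identically, i.e. (d/ds) p(y + s·x)|_{s=0} = 0 for all y ∈ ℝⁿ}. -/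
open MvPolynomial

lemma aeval_real_eq_eval {k : ℕ} (v : Fin k → ℝ) (q : MvPolynomial (Fin k) ℝ) :
    MvPolynomial.aeval v q = MvPolynomial.eval v q := by
  rw [MvPolynomial.aeval_def, MvPolynomial.eval]
  simp [MvPolynomial.eval₂Hom]

lemma eval_aeval_poly {n : ℕ} (p : MvPolynomial (Fin n) ℝ) (f : Fin n → Polynomial ℝ) (s : ℝ) :
    Polynomial.eval s (MvPolynomial.aeval f p) =
      MvPolynomial.eval (fun i => Polynomial.eval s (f i)) p := by
  have h := AlgHom.congr_fun (MvPolynomial.comp_aeval f (Polynomial.aeval s : _ →ₐ[ℝ] ℝ)) p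
  simp only [AlgHom.coe_comp, Function.comp_apply] at h
  rw [← Polynomial.coe_aeval_eq_eval, h, ← aeval_real_eq_eval]

lemma eval_aeval_mv {n k : ℕ} (p : MvPolynomial (Fin n) ℝ) (f : Fin n → MvPolynomial (Fin k) ℝ)
    (v : Fin k → ℝ) :
    MvPolynomial.eval v (MvPolynomial.aeval f p) =
      MvPolynomial.eval (fun i => MvPolynomial.eval v (f i)) p := by
  have h := AlgHom.congr_fun (MvPolynomial.comp_aeval f (MvPolynomial.aeval v : _ →ₐ[ℝ] ℝ)) p
  simp only [AlgHom.coe_comp, Function.comp_apply] at h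
  rw [← aeval_real_eq_eval, h, ← aeval_real_eq_eval]
  simp only [aeval_real_eq_eval]


lemma degree_eq_sum_univ {k : ℕ} (d : Fin k →₀ ℕ) : d.degree = ∑ i, d i := by
  rw [Finsupp.degree]
  exact Finset.sum_subset (Finset.subset_univ _)
    (fun i _ hi => Finsupp.notMem_support_iff.mp hi)

lemma homog_eval_smul {k m : ℕ} {p : MvPolynomial (Fin k) ℝ} (hp : p.IsHomogeneous m)
    (c : ℝ) (x : Fin k → ℝ) : eval (c • x) p = c ^ m * eval x p := by
  rw [eval_eq', eval_eq', Finset.mul_sum]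
  refine Finset.sum_congr rfl (fun d hd => ?_)
  have hdeg : ∑ i, d i = m := by
    rw [← degree_eq_sum_univ, Finsupp.degree_eq_weight_one]
    exact hp (MvPolynomial.mem_support_iff.mp hd)
  have : ∏ i, (c • x) i ^ d i = c ^ m * ∏ i, x i ^ d i := by
    simp only [Pi.smul_apply, smul_eq_mul, mul_pow]
    rw [Finset.prod_mul_distrib, Finset.prod_pow_eq_pow_sum, hdeg]
  rw [this]; ring

lemma poly_bounded_const (P : Polynomial ℝ) (K : ℝ) (h : ∀ s : ℝ, |P.eval s| ≤ K) (s : ℝ) :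
    P.eval s = P.eval 0 := by
  have hdeg : ¬ 0 < P.degree := by
    intro hd
    obtain ⟨s₀, hs₀⟩ := (Filter.tendsto_atTop.mp (Polynomial.abs_tendsto_atTop P hd) (K + 1)
      ).exists
    linarith [h s₀]
  rw [Polynomial.eq_C_of_degree_le_zero (not_lt.mp hdeg)]
  simp

lemma sum_powersetCard_one {ι : Type*} [DecidableEq ι] (s : Finset ι) (f : ι → ℝ) :
    ∑ t ∈ s.powersetCard 1, ∏ i ∈ t, f i = ∑ i ∈ s, f i := by
  rw [Finset.powersetCard_one, Finset.sum_map]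
  simp

lemma sq_sum_eq_two_esymm {ι : Type*} [DecidableEq ι] (s : Finset ι) (f : ι → ℝ) :
    (∑ i ∈ s, f i) ^ 2 =
      ∑ i ∈ s, f i ^ 2 + 2 * ∑ t ∈ s.powersetCard 2, ∏ i ∈ t, f i := by
  induction s using Finset.induction_on with
  | empty => rw [Finset.powersetCard_eq_empty.mpr (by simp)]; simp
  | @insert a s ha ih =>
    rw [Finset.sum_insert ha, Finset.sum_insert ha,
      Finset.powersetCard_succ_insert ha, Finset.sum_union, Finset.sum_image]
    · have h1 : ∑ t ∈ s.powersetCard 1, ∏ i ∈ insert a t, f i = f a * ∑ i ∈ s, f i := by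
        rw [Finset.powersetCard_one, Finset.sum_map, Finset.mul_sum]
        refine Finset.sum_congr rfl (fun b hb => ?_)
        have hab : a ∉ ({b} : Finset ι) := by
          simp only [Finset.mem_singleton]
          rintro rfl; exact ha hb
        simp [Finset.prod_insert hab]
      rw [h1]; ring_nf
      linarith [ih]
    · intro t ht t' ht' htt'
      have hat : a ∉ t := fun hc => ha ((Finset.mem_powersetCard.mp ht).1 hc)
      have hat' : a ∉ t' := fun hc => ha ((Finset.mem_powersetCard.mp ht').1 hc)
      rw [← Finset.erase_insert hat, ← Finset.erase_insert hat', htt']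
    · rw [Finset.disjoint_left]
      intro t ht htim
      obtain ⟨t', ht', rfl⟩ := Finset.mem_image.mp htim
      have : a ∉ t' := fun hc => ha ((Finset.mem_powersetCard.mp ht').1 hc)
      exact (fun hc => ha ((Finset.mem_powersetCard.mp ht).1 hc)) (Finset.mem_insert_self a t')


-- the substitution killing variable 1
noncomputable def killY : Fin 3 → MvPolynomial (Fin 3) ℝ := fun j => if j = 1 then 0 else X j

lemma coeff_aeval_killY (T : MvPolynomial (Fin 3) ℝ) (d : Fin 3 →₀ ℕ) (hd : d 1 = 0) :
    MvPolynomial.coeff d (MvPolynomial.aeval killY T) = MvPolynomial.coeff d T := by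
  conv_lhs => rw [← MvPolynomial.support_sum_monomial_coeff T]
  rw [map_sum]
  have hterm : ∀ e : Fin 3 →₀ ℕ, ∀ c : ℝ,
      MvPolynomial.aeval killY (monomial e c) =
        if e 1 = 0 then monomial e c else 0 := by
    intro e c
    rw [MvPolynomial.aeval_monomial, Finsupp.prod_fintype _ _ (fun i => pow_zero _),
      Fin.prod_univ_three]
    by_cases h1 : e 1 = 0
    · rw [if_pos h1, h1]
      rw [MvPolynomial.monomial_eq, Finsupp.prod_fintype _ _ (fun i => pow_zero _),
        Fin.prod_univ_three, h1]
      simp [killY]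
    · rw [if_neg h1]
      simp [killY, zero_pow h1]
  rw [MvPolynomial.coeff_sum]
  rw [Finset.sum_eq_single d]
  · rw [hterm, if_pos hd, MvPolynomial.coeff_monomial, if_pos rfl]
  · intro e he hne
    rw [hterm]
    by_cases h1 : e 1 = 0
    · rw [if_pos h1, MvPolynomial.coeff_monomial, if_neg hne]
    · rw [if_neg h1, MvPolynomial.coeff_zero]
  · intro hd'
    rw [hterm, if_pos hd, MvPolynomial.coeff_monomial, if_pos rfl]
    exact MvPolynomial.notMem_support_iff.mp hd'


noncomputable def mk3 (m j β : ℕ) : Fin 3 →₀ ℕ :=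
  Finsupp.single 0 j + Finsupp.single 1 (m - j - β) + Finsupp.single 2 β

@[simp] lemma mk3_zero (m j β : ℕ) : mk3 m j β 0 = j := by
  simp [mk3, Finsupp.single_apply]

@[simp] lemma mk3_one (m j β : ℕ) : mk3 m j β 1 = m - j - β := by
  simp [mk3, Finsupp.single_apply]

@[simp] lemma mk3_two (m j β : ℕ) : mk3 m j β 2 = β := by
  simp [mk3, Finsupp.single_apply]

lemma degree_eq_sum_univ_aux {k : ℕ} (d : Fin k →₀ ℕ) : d.degree = ∑ i, d i := by
  rw [Finsupp.degree]
  exact Finset.sum_subset (Finset.subset_univ _)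
    (fun i _ hi => Finsupp.notMem_support_iff.mp hi)

lemma support_deg3 {m : ℕ} {T : MvPolynomial (Fin 3) ℝ} (hT : T.IsHomogeneous m)
    {d : Fin 3 →₀ ℕ} (hd : MvPolynomial.coeff d T ≠ 0) : d 0 + d 1 + d 2 = m := by
  have h : d.degree = m := by
    have h := hT hd
    rw [Finsupp.degree_eq_weight_one]; exact h
  rw [← h, degree_eq_sum_univ_aux]
  exact (Fin.sum_univ_three _).symm


lemma eval_T_sum {m : ℕ} (T : MvPolynomial (Fin 3) ℝ) (hT : T.IsHomogeneous m) (t s : ℝ) :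
    MvPolynomial.eval ![t, 1, s] T =
      ∑ j ∈ Finset.range (m + 1), ∑ β ∈ Finset.range (m + 1),
        MvPolynomial.coeff (mk3 m j β) T * s ^ β * t ^ j := by
  classical
  rw [eval_eq']
  rw [← Finset.sum_product']
  rw [← Finset.sum_filter_of_ne (p := fun q : ℕ × ℕ => MvPolynomial.coeff (mk3 m q.1 q.2) T ≠ 0)
    (fun q _ hq => fun hc => hq (by rw [hc]; ring))]
  refine Finset.sum_nbij' (fun d => (d 0, d 2)) (fun q => mk3 m q.1 q.2) ?_ ?_ ?_ ?_ ?_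
  · intro d hd
    have hc := MvPolynomial.mem_support_iff.mp hd
    have hsum := support_deg3 hT hc
    have hmk : mk3 m (d 0) (d 2) = d := by
      ext i
      fin_cases i <;> simp <;> omega
    rw [Finset.mem_filter, Finset.mem_product]
    dsimp only
    rw [hmk]
    exact ⟨⟨Finset.mem_range.mpr (by omega), Finset.mem_range.mpr (by omega)⟩, hc⟩
  · intro q hq
    rw [Finset.mem_filter] at hq
    exact MvPolynomial.mem_support_iff.mpr hq.2
  · intro d hd
    have hc := MvPolynomial.mem_support_iff.mp hd
    have hsum := support_deg3 hT hc
    dsimp only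
    ext i
    fin_cases i <;> simp <;> omega
  · intro q hq
    simp
  · intro d hd
    have hc := MvPolynomial.mem_support_iff.mp hd
    have hsum := support_deg3 hT hc
    dsimp only
    rw [Fin.prod_univ_three]
    simp only [Matrix.cons_val_zero, Matrix.cons_val_one, Matrix.head_cons]
    have h2 : (![t, 1, s] : Fin 3 → ℝ) 2 = s := rfl
    have hmk : mk3 m (d 0) (d 2) = d := by
      ext i
      fin_cases i <;> simp <;> omega
    rw [h2, hmk]
    ring

lemma null_linear {n m : ℕ} (hm : 1 ≤ m) (p : MvPolynomial (Fin n) ℝ) (hp : p.IsHomogeneous m)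
    (a : Fin n → ℝ) (hhyp : IsHyperbolic m p a) (x : Fin n → ℝ)
    (hx : ∀ t : ℝ, eval (t • a + x) p = eval a p * t ^ m)
    (s : ℝ) (y : Fin n → ℝ) : eval (y + s • x) p = eval y p := by
  classical
  obtain ⟨hpa, hexists⟩ := hhyp
  set pa := eval a p with hpadef
  -- step 0 : the whole (a,x) plane
  have hx2 : ∀ t u : ℝ, eval (t • a + u • x) p = pa * t ^ m := by
    intro t u
    rcases eq_or_ne u 0 with rfl | hu
    · rw [zero_smul, add_zero, homog_eval_smul hp]
      ring
    · have hv : t • a + u • x = u • ((t / u) • a + x) := by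
        funext i
        simp only [Pi.add_apply, Pi.smul_apply, smul_eq_mul]
        field_simp
      rw [hv, homog_eval_smul hp, hx]
      rw [show u ^ m * (pa * (t / u) ^ m) = pa * (u * (t / u)) ^ m by rw [mul_pow]; ring]
      rw [mul_div_cancel₀ _ hu]
  -- the trivariate polynomial
  set ℓ : Fin n → MvPolynomial (Fin 3) ℝ :=
    fun i => C (a i) * X 0 + (C (y i) * X 1 + C (x i) * X 2) with hldef
  set T : MvPolynomial (Fin 3) ℝ := MvPolynomial.aeval ℓ p with hTdef
  have hThom : T.IsHomogeneous m := by
    have h1 : ∀ i, (ℓ i).IsHomogeneous 1 := fun i =>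
      ((isHomogeneous_C_mul_X _ _).add
        ((isHomogeneous_C_mul_X _ _).add (isHomogeneous_C_mul_X _ _)))
    have := hp.aeval ℓ h1
    simpa [hTdef] using this
  have hTeval : ∀ v : Fin 3 → ℝ,
      eval v T = eval (v 0 • a + (v 1 • y + v 2 • x)) p := by
    intro v
    rw [hTdef, eval_aeval_mv]
    have hfun : (fun i => eval v (ℓ i)) = (v 0 • a + (v 1 • y + v 2 • x)) := by
      funext i
      simp only [hldef, map_add, map_mul, eval_C, eval_X, Pi.add_apply, Pi.smul_apply,
        smul_eq_mul]
      ring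
    rw [hfun]
  -- kill the y variable
  have hT0eval : ∀ v : Fin 3 → ℝ, eval v (MvPolynomial.aeval killY T) = pa * (v 0) ^ m := by
    intro v
    rw [eval_aeval_mv, hTeval]
    have e0 : eval v (killY 0) = v 0 := by simp [killY, show (0:Fin 3) ≠ 1 by decide]
    have e1 : eval v (killY 1) = 0 := by simp [killY]
    have e2 : eval v (killY 2) = v 2 := by simp [killY, show (2:Fin 3) ≠ 1 by decide]
    rw [e0, e1, e2, zero_smul, zero_add]
    exact hx2 _ _
  have hT0 : MvPolynomial.aeval killY T = C pa * X 0 ^ m := by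
    apply MvPolynomial.funext
    intro v
    rw [hT0eval]
    simp
  have hkill : ∀ d : Fin 3 →₀ ℕ, d 1 = 0 →
      MvPolynomial.coeff d T = MvPolynomial.coeff d (C pa * (X 0 : MvPolynomial (Fin 3) ℝ) ^ m) := by
    intro d hd
    rw [← hT0, coeff_aeval_killY T d hd]
  have hcoeff_top : ∀ j β : ℕ, j + β = m → 1 ≤ β → MvPolynomial.coeff (mk3 m j β) T = 0 := by
    intro j β hjm hβ
    rw [hkill _ (by simp; omega)]
    rw [MvPolynomial.coeff_C_mul, MvPolynomial.coeff_X_pow]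
    rw [if_neg, mul_zero]
    intro hc
    have h2 := DFunLike.congr_fun hc (2 : Fin 3)
    simp [Finsupp.single_apply] at h2
    omega
  have hcoeff_high : ∀ j β : ℕ, m < j + β → MvPolynomial.coeff (mk3 m j β) T = 0 := by
    intro j β hjm
    apply hThom.coeff_eq_zero
    rw [degree_eq_sum_univ_aux, Fin.sum_univ_three]
    simp
    omega
  -- eigenvalues of y + s x
  choose μ hμ using fun u : ℝ => hexists (y + u • x)
  have ckey : ∀ u : ℝ, ∀ j : ℕ, j ≤ m →
      (∑ β ∈ Finset.range (m + 1), MvPolynomial.coeff (mk3 m j β) T * u ^ β) =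
        pa * (∏ k, (Polynomial.X + Polynomial.C (μ u k))).coeff j := by
    intro u j hj
    have hLR : (∑ j' ∈ Finset.range (m + 1),
        Polynomial.C (∑ β ∈ Finset.range (m + 1), MvPolynomial.coeff (mk3 m j' β) T * u ^ β) *
          Polynomial.X ^ j') =
        Polynomial.C pa * ∏ k, (Polynomial.X + Polynomial.C (μ u k)) := by
      apply Polynomial.funext
      intro t
      have h1 : Polynomial.eval t (∑ j' ∈ Finset.range (m + 1),
          Polynomial.C (∑ β ∈ Finset.range (m + 1), MvPolynomial.coeff (mk3 m j' β) T * u ^ β) *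
            Polynomial.X ^ j') =
          ∑ j' ∈ Finset.range (m + 1), (∑ β ∈ Finset.range (m + 1),
            MvPolynomial.coeff (mk3 m j' β) T * u ^ β) * t ^ j' := by
        simp [Polynomial.eval_finset_sum]
      rw [h1]
      have h2 : ∑ j' ∈ Finset.range (m + 1), (∑ β ∈ Finset.range (m + 1),
            MvPolynomial.coeff (mk3 m j' β) T * u ^ β) * t ^ j' =
          eval ![t, 1, u] T := by
        rw [eval_T_sum T hThom]
        refine Finset.sum_congr rfl (fun j' _ => ?_)
        rw [Finset.sum_mul]
      rw [h2, hTeval]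
      have h3 : (![t, 1, u] : Fin 3 → ℝ) 0 = t := rfl
      have h4 : (![t, 1, u] : Fin 3 → ℝ) 1 = 1 := rfl
      have h5 : (![t, 1, u] : Fin 3 → ℝ) 2 = u := rfl
      rw [h3, h4, h5, one_smul]
      rw [show t • a + (y + u • x) = t • a + (y + u • x) from rfl]
      rw [hμ u t]
      simp [Polynomial.eval_prod, hpadef]
    have := congrArg (fun q => Polynomial.coeff q j) hLR
    rw [Polynomial.finset_sum_coeff] at this
    simp only [Polynomial.coeff_C_mul, Polynomial.coeff_X_pow, mul_ite, mul_one, mul_zero] at this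
    rw [Finset.sum_ite_eq (Finset.range (m + 1)) j] at this
    rw [if_pos (Finset.mem_range.mpr (by omega))] at this
    exact this
  -- constant first coefficient
  set E1 : ℝ := MvPolynomial.coeff (mk3 m (m - 1) 0) T with hE1def
  have hc1 : ∀ u : ℝ, pa * (∑ k, μ u k) = E1 := by
    intro u
    have hco : (∏ k, (Polynomial.X + Polynomial.C (μ u k))).coeff (m - 1) = ∑ k, μ u k := by
      rw [Finset.prod_X_add_C_coeff _ _ (by rw [Finset.card_univ, Fintype.card_fin]; omega)]
      rw [Finset.card_univ, Fintype.card_fin, show m - (m - 1) = 1 by omega]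
      exact sum_powersetCard_one _ _
    have h := (ckey u (m - 1) (by omega)).symm
    rw [hco] at h
    rw [h, Finset.sum_eq_single 0]
    · simp [hE1def]
    · intro β hβ hβ0
      rcases eq_or_lt_of_le (Nat.one_le_iff_ne_zero.mpr hβ0) with h1 | h2
      · rw [← h1, hcoeff_top (m - 1) 1 (by omega) le_rfl, zero_mul]
      · rw [hcoeff_high (m - 1) β (by omega), zero_mul]
    · intro hc
      exact absurd (Finset.mem_range.mpr (by omega)) hc
  -- bound on the eigenvalues
  have hKbound : ∃ K : ℝ, ∀ u : ℝ, ∑ k, (μ u k) ^ 2 ≤ K := by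
    rcases eq_or_lt_of_le hm with h1 | h2
    · -- m = 1
      refine ⟨(E1 / pa) ^ 2, fun u => ?_⟩
      have hsum : ∑ k, μ u k = E1 / pa := by
        rw [eq_div_iff (ne_of_gt hpa), mul_comm]
        exact hc1 u
      have : ∑ k : Fin m, (μ u k) ^ 2 = (∑ k : Fin m, μ u k) ^ 2 := by
        subst h1
        simp [Fin.sum_univ_one]
      rw [this, hsum]
    · -- m ≥ 2
      set A : ℝ := MvPolynomial.coeff (mk3 m (m - 2) 0) T with hAdef
      set B : ℝ := MvPolynomial.coeff (mk3 m (m - 2) 1) T with hBdef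
      have hc2 : ∀ u : ℝ,
          pa * (∑ t ∈ (Finset.univ : Finset (Fin m)).powersetCard 2, ∏ k ∈ t, μ u k) =
            A + B * u := by
        intro u
        have hco : (∏ k, (Polynomial.X + Polynomial.C (μ u k))).coeff (m - 2) =
            ∑ t ∈ (Finset.univ : Finset (Fin m)).powersetCard 2, ∏ k ∈ t, μ u k := by
          rw [Finset.prod_X_add_C_coeff _ _ (by rw [Finset.card_univ, Fintype.card_fin]; omega)]
          rw [Finset.card_univ, Fintype.card_fin, show m - (m - 2) = 2 by omega]
        have h := (ckey u (m - 2) (by omega)).symm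
        rw [hco] at h
        rw [h]
        have hsub : ({0, 1} : Finset ℕ) ⊆ Finset.range (m + 1) := by
          intro i hi
          simp only [Finset.mem_insert, Finset.mem_singleton] at hi
          rcases hi with rfl | rfl <;> exact Finset.mem_range.mpr (by omega)
        rw [← Finset.sum_subset hsub]
        · rw [Finset.sum_insert (by simp), Finset.sum_singleton]
          ring
        · intro β hβ hβni
          simp only [Finset.mem_insert, Finset.mem_singleton, not_or] at hβni
          rcases eq_or_lt_of_le (show 2 ≤ β by omega) with h1 | h2'
          · rw [← h1, hcoeff_top (m - 2) 2 (by omega) (by omega), zero_mul]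
          · rw [hcoeff_high (m - 2) β (by omega), zero_mul]
      have hB : B = 0 := by
        by_contra hB0
        set u₀ : ℝ := (pa * ((E1 / pa) ^ 2 + 1) / 2 - A) / B with hu₀
        have hSQ : ∑ k, (μ u₀ k) ^ 2 = -1 := by
          have hsum : ∑ k, μ u₀ k = E1 / pa := by
            rw [eq_div_iff (ne_of_gt hpa), mul_comm]; exact hc1 u₀
          have hesym : ∑ t ∈ (Finset.univ : Finset (Fin m)).powersetCard 2, ∏ k ∈ t, μ u₀ k =
              (A + B * u₀) / pa := by
            rw [eq_div_iff (ne_of_gt hpa), mul_comm]; exact hc2 u₀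
          have hid := sq_sum_eq_two_esymm (Finset.univ : Finset (Fin m)) (μ u₀)
          rw [hsum, hesym] at hid
          have hBu : B * u₀ = pa * ((E1 / pa) ^ 2 + 1) / 2 - A := by
            rw [hu₀, mul_div_cancel₀ _ hB0]
          have hAB : A + B * u₀ = pa * ((E1 / pa) ^ 2 + 1) / 2 := by rw [hBu]; ring
          rw [hAB] at hid
          have h2' : 2 * (pa * ((E1 / pa) ^ 2 + 1) / 2 / pa) = (E1 / pa) ^ 2 + 1 := by
            field_simp
          rw [h2'] at hid
          linarith
        have := Finset.sum_nonneg (fun k (_ : k ∈ Finset.univ) => sq_nonneg (μ u₀ k))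
        rw [hSQ] at this
        linarith
      refine ⟨(E1 / pa) ^ 2 - 2 * (A / pa), fun u => ?_⟩
      have hsum : ∑ k, μ u k = E1 / pa := by
        rw [eq_div_iff (ne_of_gt hpa), mul_comm]; exact hc1 u
      have hesym : ∑ t ∈ (Finset.univ : Finset (Fin m)).powersetCard 2, ∏ k ∈ t, μ u k =
          A / pa := by
        rw [eq_div_iff (ne_of_gt hpa), mul_comm]
        have := hc2 u
        rw [hB, zero_mul, add_zero] at this
        exact this
      have hid := sq_sum_eq_two_esymm (Finset.univ : Finset (Fin m)) (μ u)
      rw [hsum, hesym] at hid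
      nlinarith [hid]
  obtain ⟨K, hK⟩ := hKbound
  have hKnn : 0 ≤ K := le_trans (Finset.sum_nonneg fun k _ => sq_nonneg (μ 0 k)) (hK 0)
  set M : ℝ := Real.sqrt K with hMdef
  have hMnn : 0 ≤ M := Real.sqrt_nonneg K
  have hM : ∀ u k, |μ u k| ≤ M := by
    intro u k
    rw [← Real.sqrt_sq_eq_abs, hMdef]
    apply Real.sqrt_le_sqrt
    exact le_trans (Finset.single_le_sum (fun k (_ : k ∈ Finset.univ) => sq_nonneg (μ u k))
      (Finset.mem_univ k)) (hK u)
  -- the constant term polynomial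
  have hcoeff0 : ∀ u : ℝ, (∏ k, (Polynomial.X + Polynomial.C (μ u k))).coeff 0 = ∏ k, μ u k := by
    intro u
    rw [Finset.prod_X_add_C_coeff _ _ (Nat.zero_le _), Nat.sub_zero,
      Finset.powersetCard_self, Finset.sum_singleton]
  set P0 : Polynomial ℝ := ∑ β ∈ Finset.range (m + 1),
    Polynomial.C (MvPolynomial.coeff (mk3 m 0 β) T) * Polynomial.X ^ β with hP0def
  have hP0eval : ∀ u : ℝ, P0.eval u = pa * ∏ k, μ u k := by
    intro u
    have h1 : P0.eval u = ∑ β ∈ Finset.range (m + 1),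
        MvPolynomial.coeff (mk3 m 0 β) T * u ^ β := by
      rw [hP0def, Polynomial.eval_finset_sum]
      simp
    rw [h1, ckey u 0 (Nat.zero_le _), hcoeff0]
  have hP0bdd : ∀ u : ℝ, |P0.eval u| ≤ pa * M ^ m := by
    intro u
    rw [hP0eval, abs_mul, abs_of_pos hpa]
    apply mul_le_mul_of_nonneg_left _ (le_of_lt hpa)
    calc |∏ k, μ u k| = ∏ k, |μ u k| := by rw [Finset.abs_prod]
    _ ≤ ∏ _k : Fin m, M := Finset.prod_le_prod (fun k _ => abs_nonneg _) (fun k _ => hM u k)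
    _ = M ^ m := by rw [Finset.prod_const, Finset.card_univ, Fintype.card_fin]
  have hconst := poly_bounded_const P0 (pa * M ^ m) hP0bdd
  -- conclusion
  have hz : ∀ u : ℝ, eval (y + u • x) p = P0.eval u := by
    intro u
    rw [hP0eval]
    have h := hμ u 0
    rw [zero_smul, zero_add] at h
    simpa using h
  rw [hz s, hconst s, ← hz 0, zero_smul, add_zero]

lemma eval_line {n : ℕ} (p : MvPolynomial (Fin n) ℝ) (b z : Fin n → ℝ) (s : ℝ) :
    Polynomial.eval s (MvPolynomial.aeval
      (fun i => Polynomial.C (b i) + Polynomial.X * Polynomial.C (z i)) p) =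
      eval (b + s • z) p := by
  rw [eval_aeval_poly]
  have hfun : (fun i => Polynomial.eval s (Polynomial.C (b i) + Polynomial.X * Polynomial.C (z i)))
      = (b + s • z) := by
    funext i
    simp only [Polynomial.eval_add, Polynomial.eval_C, Polynomial.eval_mul, Polynomial.eval_X,
      Pi.add_apply, Pi.smul_apply, smul_eq_mul]
  rw [hfun]

lemma diff_line {n : ℕ} (p : MvPolynomial (Fin n) ℝ) (b z : Fin n → ℝ) :
    Differentiable ℝ (fun s : ℝ => eval (b + s • z) p) := by
  have h : (fun s : ℝ => eval (b + s • z) p) = fun s => Polynomial.eval s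
      (MvPolynomial.aeval
        (fun i => Polynomial.C (b i) + Polynomial.X * Polynomial.C (z i)) p) :=
    by funext s; exact (eval_line p b z s).symm
  rw [h]
  exact Polynomial.differentiable _

/-- `(iv) ⊆ (iii)` : zero directional derivative everywhere implies linearity. -/
lemma deriv_to_linear {n : ℕ} (p : MvPolynomial (Fin n) ℝ) (x : Fin n → ℝ)
    (hD : ∀ y : Fin n → ℝ, deriv (fun s : ℝ => eval (y + s • x) p) 0 = 0)
    (t : ℝ) (b : Fin n → ℝ) : eval (b + t • x) p = eval b p := by
  have hshift : ∀ c : ℝ, deriv (fun s : ℝ => eval (b + s • x) p) c = 0 := by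
    intro c
    have h1 : deriv (fun s : ℝ => eval (b + s • x) p) c =
        deriv (fun u : ℝ => eval (b + (c + u) • x) p) 0 := by
      rw [deriv_comp_const_add (fun s : ℝ => eval (b + s • x) p) c 0, add_zero]
    have h2 : (fun u : ℝ => eval (b + (c + u) • x) p) =
        fun u : ℝ => eval ((b + c • x) + u • x) p := by
      funext u
      have : b + (c + u) • x = (b + c • x) + u • x := by module
      rw [this]
    rw [h1, h2]
    exact hD (b + c • x)
  have := is_const_of_deriv_eq_zero (diff_line p b x) hshift t 0
  rw [zero_smul, add_zero] at this
  exact this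

/-- Null vectors lie in the closure of the Gårding cone. -/
lemma null_mem_closure {n m : ℕ} (p : MvPolynomial (Fin n) ℝ)
    (a : Fin n → ℝ) (hpa : 0 < eval a p) (x : Fin n → ℝ)
    (hx : ∀ t : ℝ, eval (t • a + x) p = eval a p * t ^ m) :
    x ∈ closure (GardingCone m p a) := by
  have hmem : ∀ ε : ℝ, 0 < ε → x + ε • a ∈ GardingCone m p a := by
    intro ε hε
    refine ⟨fun _ => ε, fun t => ?_, fun _ => hε⟩
    have hvec : t • a + (x + ε • a) = (t + ε) • a + x := by module
    rw [hvec, hx, Finset.prod_const, Finset.card_univ, Fintype.card_fin]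
  have htend : Filter.Tendsto (fun k : ℕ => x + (1 / (k + 1 : ℝ)) • a)
      Filter.atTop (nhds x) := by
    have h0 : Filter.Tendsto (fun k : ℕ => 1 / ((k : ℝ) + 1)) Filter.atTop (nhds 0) :=
      tendsto_one_div_add_atTop_nhds_zero_nat
    have := (h0.smul_const a).const_add x
    simpa using this
  exact mem_closure_of_tendsto htend (Filter.Eventually.of_forall fun k =>
    hmem _ (by positivity))

/-- On the closure of the Gårding cone, `p(t a + z) ≥ p(a) tᵐ` for `t ≥ 0`. -/
lemma closure_lower {n m : ℕ} (p : MvPolynomial (Fin n) ℝ)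
    (a : Fin n → ℝ) (hpa : 0 < eval a p) {z : Fin n → ℝ}
    (hz : z ∈ closure (GardingCone m p a)) {t : ℝ} (ht : 0 ≤ t) :
    eval a p * t ^ m ≤ eval (t • a + z) p := by
  have hcl : closure (GardingCone m p a) ⊆ {w | eval a p * t ^ m ≤ eval (t • a + w) p} := by
    apply closure_minimal
    · rintro w ⟨lam, hlam, hpos⟩
      simp only [Set.mem_setOf_eq]
      rw [hlam t]
      apply mul_le_mul_of_nonneg_left _ (le_of_lt hpa)
      calc t ^ m = ∏ _k : Fin m, t := by
            rw [Finset.prod_const, Finset.card_univ, Fintype.card_fin]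
        _ ≤ ∏ k, (t + lam k) :=
            Finset.prod_le_prod (fun k _ => ht) (fun k _ => by linarith [hpos k])
    · exact isClosed_le continuous_const
        ((MvPolynomial.continuous_eval p).comp (by continuity))
  exact hcl hz

/-- The edge is contained in the null set. -/
lemma edge_subset_null {n m : ℕ} (hm : 1 ≤ m) (p : MvPolynomial (Fin n) ℝ)
    (hp : p.IsHomogeneous m) (a : Fin n → ℝ) (hhyp : IsHyperbolic m p a)
    {x : Fin n → ℝ} (hx : x ∈ closure (GardingCone m p a))
    (hnx : -x ∈ closure (GardingCone m p a)) :
    ∀ t : ℝ, eval (t • a + x) p = eval a p * t ^ m := by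
  obtain ⟨hpa, hexists⟩ := hhyp
  obtain ⟨lam, hlam⟩ := hexists x
  have h1 : ∀ t : ℝ, 0 ≤ t → t ^ m ≤ ∏ k, (t + lam k) := by
    intro t ht
    have := closure_lower p a hpa hx ht
    rw [hlam t] at this
    exact le_of_mul_le_mul_left this hpa
  have h2 : ∀ t : ℝ, 0 ≤ t → t ^ m ≤ ∏ k, (t - lam k) := by
    intro t ht
    have hlow := closure_lower p a hpa hnx ht
    have hvec : t • a + -x = (-1 : ℝ) • ((-t) • a + x) := by module
    rw [hvec, homog_eval_smul hp, hlam (-t)] at hlow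
    have hflip : (-1 : ℝ) ^ m * ∏ k, (-t + lam k) = ∏ k : Fin m, (t - lam k) := by
      rw [show ((-1 : ℝ) ^ m) = ∏ _k : Fin m, (-1 : ℝ) by
        rw [Finset.prod_const, Finset.card_univ, Fintype.card_fin],
        ← Finset.prod_mul_distrib]
      exact Finset.prod_congr rfl (fun k _ => by ring)
    rw [show ((-1 : ℝ)) ^ m * (eval a p * ∏ k, (-t + lam k)) =
      eval a p * ((-1 : ℝ) ^ m * ∏ k, (-t + lam k)) from by ring, hflip] at hlow
    exact le_of_mul_le_mul_left hlow hpa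
  have hzero : ∀ k, lam k = 0 := by
    by_contra hk
    push_neg at hk
    obtain ⟨k₀, hk₀⟩ := hk
    set v : ℝ := 1 + ∑ k, |lam k| with hv
    have hsum_nn : 0 ≤ ∑ k, |lam k| := Finset.sum_nonneg fun k _ => abs_nonneg _
    have hvpos : 0 < v := by rw [hv]; linarith
    have hvk : ∀ k, |lam k| < v := fun k =>
      lt_of_le_of_lt (Finset.single_le_sum (fun k _ => abs_nonneg (lam k))
        (Finset.mem_univ k)) (by rw [hv]; linarith)
    have hA := h1 v (le_of_lt hvpos)
    have hB := h2 v (le_of_lt hvpos)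
    have hABpos : 0 < v ^ m := pow_pos hvpos m
    have hprod : (∏ k, (v + lam k)) * (∏ k, (v - lam k)) = ∏ k, (v ^ 2 - lam k ^ 2) := by
      rw [← Finset.prod_mul_distrib]
      exact Finset.prod_congr rfl fun k _ => by ring
    have hlt : ∏ k, (v ^ 2 - lam k ^ 2) < ∏ _k : Fin m, v ^ 2 := by
      apply Finset.prod_lt_prod
      · intro k _
        nlinarith [hvk k, abs_nonneg (lam k), sq_abs (lam k)]
      · intro k _
        nlinarith [sq_nonneg (lam k)]
      · refine ⟨k₀, Finset.mem_univ k₀, ?_⟩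
        have h0 : 0 < |lam k₀| := abs_pos.mpr hk₀
        nlinarith [sq_abs (lam k₀)]
    have hv2 : ∏ _k : Fin m, (v ^ 2 : ℝ) = v ^ m * v ^ m := by
      rw [Finset.prod_const, Finset.card_univ, Fintype.card_fin, ← pow_add, ← two_mul, pow_mul]
    have hmul : v ^ m * v ^ m ≤ (∏ k, (v + lam k)) * (∏ k, (v - lam k)) :=
      mul_le_mul hA hB (le_of_lt hABpos) (le_trans (le_of_lt hABpos) hA)
    rw [hprod] at hmul
    rw [hv2] at hlt
    linarith
  intro t
  rw [hlam t]
  have hone : ∀ k : Fin m, t + lam k = t := fun k => by rw [hzero k, add_zero]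
  rw [Finset.prod_congr rfl (fun k _ => hone k), Finset.prod_const, Finset.card_univ,
    Fintype.card_fin]
/-- the edge `E = closure Γ ∩ (−closure Γ)` equals the null set of `p`,
the linearity set of `p`, and the set of directions in which the derivative of `p`
vanishes identically. -/
theorem edge_characterizations
    {n m : ℕ} (hm : 1 ≤ m) (p : MvPolynomial (Fin n) ℝ) (hp : p.IsHomogeneous m)
    (a : Fin n → ℝ) (hhyp : IsHyperbolic m p a) :
    closure (GardingCone m p a) ∩ (-closure (GardingCone m p a)) =
      {x : Fin n → ℝ | ∀ t : ℝ, eval (t • a + x) p = eval a p * t ^ m} ∧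
    closure (GardingCone m p a) ∩ (-closure (GardingCone m p a)) =
      {x : Fin n → ℝ | ∀ t : ℝ, ∀ b : Fin n → ℝ, eval (b + t • x) p = eval b p} ∧
    closure (GardingCone m p a) ∩ (-closure (GardingCone m p a)) =
      {x : Fin n → ℝ | ∀ y : Fin n → ℝ, deriv (fun s : ℝ => eval (y + s • x) p) 0 = 0} := by
  have hEN : closure (GardingCone m p a) ∩ (-closure (GardingCone m p a)) =
      {x : Fin n → ℝ | ∀ t : ℝ, eval (t • a + x) p = eval a p * t ^ m} := by
    ext x
    constructor
    · rintro ⟨hx, hnx⟩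
      exact edge_subset_null hm p hp a hhyp hx (Set.mem_neg.mp hnx)
    · intro hx
      refine ⟨null_mem_closure p a hhyp.1 x hx, Set.mem_neg.mpr ?_⟩
      apply null_mem_closure p a hhyp.1
      intro t
      have hvec : t • a + -x = (-1 : ℝ) • ((-t) • a + x) := by module
      rw [hvec, homog_eval_smul hp, hx (-t)]
      rw [show (-1 : ℝ) ^ m * (eval a p * (-t) ^ m) = eval a p * ((-1) * (-t)) ^ m from by
        rw [mul_pow]; ring]
      rw [neg_one_mul, neg_neg]
  have hNL : {x : Fin n → ℝ | ∀ t : ℝ, eval (t • a + x) p = eval a p * t ^ m} =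
      {x : Fin n → ℝ | ∀ t : ℝ, ∀ b : Fin n → ℝ, eval (b + t • x) p = eval b p} := by
    ext x
    constructor
    · intro hx t b
      exact null_linear hm p hp a hhyp x hx t b
    · intro hx t
      have h1 := hx 1 (t • a)
      rw [one_smul] at h1
      rw [h1, homog_eval_smul hp]
      ring
  have hLD : {x : Fin n → ℝ | ∀ t : ℝ, ∀ b : Fin n → ℝ, eval (b + t • x) p = eval b p} =
      {x : Fin n → ℝ | ∀ y : Fin n → ℝ, deriv (fun s : ℝ => eval (y + s • x) p) 0 = 0} := by
    ext x
    constructor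
    · intro hx y
      have hconst : (fun s : ℝ => eval (y + s • x) p) = fun _ => eval y p :=
        by funext s; exact hx s y
      rw [hconst, deriv_const]
    · intro hx t b
      exact deriv_to_linear p x hx t b
  exact ⟨hEN, hEN.trans hNL, hEN.trans (hNL.trans hLD)⟩
end

section
/- Gårding's inequality: Suppose p is a-hyperbolic of degree m with Gårding cone Γ, and let b ∈ Γ. Then p(b) = inf_{t>0} p(a + t·b)/tᵐ and p(b) ≤ p(a)^{1−m} · ((1/m)·p′_b(a))ᵐ, where p′_b(a) = (d/ds) p(a + s·b)|_{s=0}. Equality holds in the second inequality if and only if all the a-eigenvalues of b are equal. -/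
open MvPolynomial

lemma eval_smul_of_isHomogeneous {n m : ℕ} {p : MvPolynomial (Fin n) ℝ}
    (hp : p.IsHomogeneous m) (c : ℝ) (x : Fin n → ℝ) :
    eval (c • x) p = c ^ m * eval x p := by
  rw [eval_eq, eval_eq, Finset.mul_sum]
  refine Finset.sum_congr rfl fun d hd => ?_
  have hdm : ∑ i ∈ d.support, d i = m := by
    have h := hp (mem_support_iff.mp hd)
    rw [Finsupp.weight_apply] at h
    simpa only [Finsupp.sum, Pi.one_apply, smul_eq_mul, mul_one] using h
  have h1 : ∏ i ∈ d.support, (c • x) i ^ d i = c ^ m * ∏ i ∈ d.support, x i ^ d i := by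
    simp only [Pi.smul_apply, smul_eq_mul, mul_pow]
    rw [Finset.prod_mul_distrib, Finset.prod_pow_eq_pow_sum, hdm]
  rw [h1]
  ring

/-- Gårding's inequality: for `b ∈ Γ`,
`p(b) = inf_{t>0} p(a + t·b)/tᵐ` and `p(b) ≤ p(a)^{1−m}·((1/m)·p′_b(a))ᵐ`,
with equality iff all the `a`-eigenvalues of `b` are equal. -/
theorem garding_inequality
    {n m : ℕ} (hm : 1 ≤ m) (p : MvPolynomial (Fin n) ℝ) (hp : p.IsHomogeneous m)
    (a : Fin n → ℝ) (hhyp : IsHyperbolic m p a)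
    (b : Fin n → ℝ) (hb : b ∈ GardingCone m p a) :
    IsGLB ((fun t : ℝ => eval (a + t • b) p / t ^ m) '' Set.Ioi (0 : ℝ)) (eval b p) ∧
    eval b p ≤ eval a p ^ (1 - (m : ℝ)) * ((1 / m : ℝ) * dirDeriv p a b) ^ m ∧
    (eval b p = eval a p ^ (1 - (m : ℝ)) * ((1 / m : ℝ) * dirDeriv p a b) ^ m ↔
      ∀ lam : Fin m → ℝ, IsEigen m p a b lam → ∀ j k : Fin m, lam j = lam k) := by
  classical
  obtain ⟨hpa, _⟩ := hhyp
  obtain ⟨lam, hlam, hpos⟩ := hb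
  have hm0 : (m : ℝ) ≠ 0 := Nat.cast_ne_zero.mpr (by omega)
  have hmpos : (0 : ℝ) < m := Nat.cast_pos.mpr (by omega)
  have hbval : eval b p = eval a p * ∏ k, lam k := by
    simpa using hlam 0
  -- Key identity
  have key : ∀ s : ℝ, eval (a + s • b) p = eval a p * ∏ k, (1 + s * lam k) := by
    intro s
    rcases eq_or_ne s 0 with rfl | hs
    · simp
    · have h1 : a + s • b = s • (s⁻¹ • a + b) := by
        rw [smul_add, smul_smul, mul_inv_cancel₀ hs, one_smul]
      rw [h1, eval_smul_of_isHomogeneous hp, hlam s⁻¹]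
      have h2 : ∀ k : Fin m, 1 + s * lam k = s * (s⁻¹ + lam k) := fun k => by
        rw [mul_add, mul_inv_cancel₀ hs]
      simp_rw [h2]
      rw [Finset.prod_mul_distrib, Finset.prod_const, Finset.card_univ, Fintype.card_fin]
      ring
  set S : ℝ := ∑ k, lam k with hS
  set G : ℝ := ∏ k, lam k with hG
  have hne : Nonempty (Fin m) := ⟨⟨0, hm⟩⟩
  have hSpos : 0 < S := Finset.sum_pos (fun k _ => hpos k) Finset.univ_nonempty
  have hGpos : 0 < G := Finset.prod_pos fun k _ => hpos k
  -- derivative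
  have hderiv : dirDeriv p a b = eval a p * S := by
    have hfun : (fun s : ℝ => eval (a + s • b) p)
        = fun s => eval a p * ∏ k, (1 + s * lam k) := funext key
    have hprod : HasDerivAt (fun s : ℝ => ∏ k, (1 + s * lam k)) S 0 := by
      have h := HasDerivAt.fun_finsetProd (u := Finset.univ)
        (f := fun (k : Fin m) (s : ℝ) => 1 + s * lam k) (f' := lam) (x := (0 : ℝ))
        (fun k _ => by simpa using ((hasDerivAt_id (0 : ℝ)).mul_const (lam k)).const_add 1)
      simpa using h
    rw [dirDeriv, hfun]
    exact (hprod.const_mul (eval a p)).deriv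
  -- identity on Ioi 0
  have himg : ∀ t ∈ Set.Ioi (0 : ℝ),
      eval (a + t • b) p / t ^ m = eval a p * ∏ k, (t⁻¹ + lam k) := by
    intro t ht
    have ht0 : t ≠ 0 := ne_of_gt ht
    rw [key t, mul_div_assoc]
    congr 1
    rw [div_eq_iff (pow_ne_zero m ht0)]
    have hpow : (t : ℝ) ^ m = ∏ _k : Fin m, t := by
      simp
    rw [hpow, ← Finset.prod_mul_distrib]
    refine Finset.prod_congr rfl fun k _ => ?_
    field_simp
  -- GLB
  have hlb : ∀ t ∈ Set.Ioi (0 : ℝ), eval b p ≤ eval a p * ∏ k, (t⁻¹ + lam k) := by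
    intro t ht
    rw [hbval]
    refine mul_le_mul_of_nonneg_left ?_ hpa.le
    refine Finset.prod_le_prod (fun k _ => (hpos k).le) (fun k _ => ?_)
    exact le_add_of_nonneg_left (inv_pos.mpr ht).le
  have htend : Filter.Tendsto (fun t : ℝ => eval a p * ∏ k, (t⁻¹ + lam k))
      Filter.atTop (nhds (eval a p * G)) := by
    refine Filter.Tendsto.const_mul _ ?_
    have h := tendsto_finset_prod (f := fun (k : Fin m) (t : ℝ) => t⁻¹ + lam k)
      (x := Filter.atTop) (a := fun k => 0 + lam k) Finset.univ
      (fun k _ => tendsto_inv_atTop_zero.add tendsto_const_nhds)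
    simpa using h
  have hglb : IsGLB ((fun t : ℝ => eval (a + t • b) p / t ^ m) '' Set.Ioi (0 : ℝ))
      (eval b p) := by
    constructor
    · rintro y ⟨t, ht, rfl⟩
      dsimp only
      rw [himg t ht]
      exact hlb t ht
    · intro y hy
      rw [hbval]
      refine ge_of_tendsto htend ((Filter.eventually_gt_atTop 0).mono fun t ht => ?_)
      have h := hy ⟨t, ht, rfl⟩
      dsimp only at h
      rwa [himg t ht] at h
  -- AM-GM with equality via strict concavity of log
  have hwsum : ∑ _k : Fin m, (1 / m : ℝ) = 1 := by
    simp only [Finset.sum_const, Finset.card_univ, Fintype.card_fin, nsmul_eq_mul]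
    field_simp
  have hmem : ∀ k : Fin m, k ∈ Finset.univ → lam k ∈ Set.Ioi (0 : ℝ) := fun k _ => hpos k
  have hsum_smul : ∑ k : Fin m, (1 / m : ℝ) • lam k = S / m := by
    simp only [smul_eq_mul, one_div, ← Finset.mul_sum, inv_mul_eq_div]
    rw [← Finset.sum_div]
  have hlogG : Real.log G = ∑ k, Real.log (lam k) :=
    Real.log_prod fun k _ => (hpos k).ne'
  have hsum_log : ∑ k : Fin m, (1 / m : ℝ) • Real.log (lam k) = (1 / m) * Real.log G := by
    simp only [smul_eq_mul, ← Finset.mul_sum, hlogG]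
  have hSm_pos : 0 < S / m := div_pos hSpos hmpos
  have hamgm : G ≤ (S / m) ^ m := by
    have h := strictConcaveOn_log_Ioi.concaveOn.le_map_sum
      (fun k (_ : k ∈ Finset.univ) => by positivity) hwsum hmem (p := lam)
    rw [hsum_smul, hsum_log] at h
    have hlog : Real.log G ≤ Real.log ((S / m) ^ m) := by
      rw [Real.log_pow]
      have := mul_le_mul_of_nonneg_left h hmpos.le
      calc Real.log G = (m : ℝ) * ((1 / m) * Real.log G) := by field_simp
        _ ≤ (m : ℝ) * Real.log (S / m) := by
            exact mul_le_mul_of_nonneg_left h hmpos.le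
    exact (Real.log_le_log_iff hGpos (by positivity)).mp hlog
  have heqcase : G = (S / m) ^ m → ∀ j k : Fin m, lam j = lam k := by
    intro hGe j k
    have h_eq : Real.log (∑ i : Fin m, (1 / m : ℝ) • lam i)
        ≤ ∑ i : Fin m, (1 / m : ℝ) • Real.log (lam i) := by
      rw [hsum_smul, hsum_log]
      have : Real.log G = (m : ℝ) * Real.log (S / m) := by
        rw [hGe, Real.log_pow]
      rw [this]
      field_simp
      exact le_rfl
    exact strictConcaveOn_log_Ioi.eq_of_map_sum_eq
      (fun i (_ : i ∈ Finset.univ) => by positivity) hwsum hmem h_eq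
      (Finset.mem_univ j) (Finset.mem_univ k)
  -- simplify the RHS
  have hR : eval a p ^ (1 - (m : ℝ)) * ((1 / m : ℝ) * dirDeriv p a b) ^ m
      = eval a p * (S / m) ^ m := by
    rw [hderiv]
    have h1 : (1 / m : ℝ) * (eval a p * S) = eval a p * (S / m) := by ring
    rw [h1, mul_pow, ← mul_assoc]
    congr 1
    rw [← Real.rpow_natCast (eval a p) m, ← Real.rpow_add hpa]
    norm_num
  refine ⟨hglb, ?_, ?_⟩
  · rw [hbval, hR]
    exact mul_le_mul_of_nonneg_left hamgm hpa.le
  · have hcancel : eval b p = eval a p ^ (1 - (m : ℝ)) * ((1 / m : ℝ) * dirDeriv p a b) ^ m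
        ↔ G = (S / m) ^ m := by
      rw [hbval, hR]
      exact mul_right_inj' hpa.ne'
    rw [hcancel]
    constructor
    · intro hGe lam' hlam' j k
      have hall := heqcase hGe
      set c : ℝ := lam ⟨0, hm⟩ with hc
      have hcc : ∀ i, lam i = c := fun i => hall i ⟨0, hm⟩
      have hpp : ∀ t : ℝ, (∏ i, (t + lam' i)) = (t + c) ^ m := by
        intro t
        have h3 : ∏ i, (t + lam' i) = ∏ i, (t + lam i) :=
          mul_left_cancel₀ hpa.ne' ((hlam' t).symm.trans (hlam t))
        rw [h3, Finset.prod_congr rfl (fun i _ => by rw [hcc i]),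
          Finset.prod_const, Finset.card_univ, Fintype.card_fin]
      have hj : lam' j = c := by
        have hz : (∏ i, (-lam' j + lam' i)) = 0 :=
          Finset.prod_eq_zero (Finset.mem_univ j) (by ring)
        have := (hpp (-lam' j)).symm.trans hz
        have h4 : -lam' j + c = 0 := by
          exact pow_eq_zero_iff (by omega) |>.mp this
        linarith
      have hk : lam' k = c := by
        have hz : (∏ i, (-lam' k + lam' i)) = 0 :=
          Finset.prod_eq_zero (Finset.mem_univ k) (by ring)
        have := (hpp (-lam' k)).symm.trans hz
        have h4 : -lam' k + c = 0 := by
          exact pow_eq_zero_iff (by omega) |>.mp this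
        linarith
      rw [hj, hk]
    · intro hall
      have hcc : ∀ i, lam i = lam ⟨0, hm⟩ := fun i => hall lam hlam i ⟨0, hm⟩
      set c : ℝ := lam ⟨0, hm⟩ with hc
      have hGc : G = c ^ m := by
        rw [hG, Finset.prod_congr rfl (fun i _ => hcc i), Finset.prod_const,
          Finset.card_univ, Fintype.card_fin]
      have hSc : S = m * c := by
        rw [hS, Finset.sum_congr rfl (fun i _ => hcc i), Finset.sum_const,
          Finset.card_univ, Fintype.card_fin, nsmul_eq_mul]
      rw [hGc, hSc, mul_div_cancel_left₀ _ hm0]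
end
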